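/- arXiv:2412.20494 — 3 statements merged into one kernel-verified Lean document; each statement's English description precedes it below -/
import Mathlib

section
/- Let A be an abelian category. A pro-object belonging to Pro_ω(A) is strict if and only if it is isomorphic in Pro(A) to plim of a diagram of epimorphisms in A indexed by the opposite of a countable directed poset. (In other words, if an object of Pro_ω(A) can be represented by some, possibly uncountable, directed diagram of epimorphisms in A, then it can also be represented by a countable directed diagram of epimorphisms.) -/
open CategoryTheory CategoryTheory.Limits Opposite

universe v u u'

namespace ProPaper

/-- A bundled nonempty directed poset with carrier in `Type v`. -/
structure DirPoset : Type (v + 1) where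
  carrier : Type v
  [str : PartialOrder carrier]
  nonempty : Nonempty carrier
  directed : IsDirected carrier (· ≤ ·)

attribute [instance] DirPoset.str

instance : CoeSort DirPoset.{v} (Type v) :=
  ⟨DirPoset.carrier⟩

variable (C : Type u) [Category.{v} C]

/-- The `Γ`-indexed diagram of corepresentable functors `Hom_C(D γ, -)`
associated to a diagram `D : Γᵒᵖ ⥤ C`. -/
def corepDiagram {Γ : Type v} [Preorder Γ] (D : Γᵒᵖ ⥤ C) : Γ ⥤ C ⥤ Type v :=
  D.rightOp ⋙ coyoneda

/-- A functor `C ⥤ Type v` is a pro-object functor if it is isomorphic to the colimit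
of the directed diagram of corepresentable functors associated to some diagram
`D : Γᵒᵖ ⥤ C` indexed by a (nonempty) directed poset `Γ`. -/
def IsProFunctor (F : C ⥤ Type v) : Prop :=
  ∃ (Γ : DirPoset.{v}) (D : Γ.carrierᵒᵖ ⥤ C),
    Nonempty (F ≅ colimit (corepDiagram C D))

/-- The category of pro-objects of `C`: the opposite of the full subcategory of
`C ⥤ Type v` spanned by the directed colimits of corepresentable functors. -/
abbrev Pro : Type max u (v + 1) :=
  (ObjectProperty.FullSubcategory (IsProFunctor C))ᵒᵖ

variable {C}

/-- The pro-object `plim_{γ ∈ Γ} D γ` associated to a diagram `D : Γᵒᵖ ⥤ C`. -/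
noncomputable def plimObj {Γ : DirPoset.{v}} (D : Γ.carrierᵒᵖ ⥤ C) : Pro C :=
  op ⟨colimit (corepDiagram C D), Γ, D, ⟨Iso.refl _⟩⟩

variable (C) in
/-- The functor `plim : (Γᵒᵖ ⥤ C) ⥤ Pro C`. -/
noncomputable def plim (Γ : DirPoset.{v}) : (Γ.carrierᵒᵖ ⥤ C) ⥤ Pro C :=
  (ObjectProperty.lift (IsProFunctor C)
    ((Functor.leftOpRightOpEquiv Γ.carrier C).functor ⋙
      (Functor.whiskeringRight Γ.carrier Cᵒᵖ (C ⥤ Type v)).obj coyoneda ⋙ colim)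
    (fun D => ⟨Γ, D.unop, ⟨Iso.refl _⟩⟩)).rightOp

@[simp]
lemma plim_obj {Γ : DirPoset.{v}} (D : Γ.carrierᵒᵖ ⥤ C) :
    (plim C Γ).obj D = plimObj D := rfl

/-- A pro-object belongs to `Pro_ω(C)` if it can be represented by a diagram indexed by
a countable directed poset. -/
def InProOmega (X : Pro C) : Prop :=
  ∃ (Γ : DirPoset.{v}), Countable Γ.carrier ∧
    ∃ (D : Γ.carrierᵒᵖ ⥤ C), Nonempty (X ≅ plimObj D)

variable (C) in
/-- The category `Pro_ω(C)`, as a full subcategory of `Pro C`. -/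
abbrev ProOmega : Type max u (v + 1) :=
  ObjectProperty.FullSubcategory (InProOmega (C := C))

/-- A pro-object is strict if it can be represented by a directed diagram all of whose
transition morphisms are epimorphisms. -/
def IsStrict (X : Pro C) : Prop :=
  ∃ (Γ : DirPoset.{v}) (D : Γ.carrierᵒᵖ ⥤ C),
    (∀ {i j : Γ.carrierᵒᵖ} (f : i ⟶ j), Epi (D.map f)) ∧ Nonempty (X ≅ plimObj D)

variable (C) in
/-- The category `SPro(C)` of strict pro-objects, as a full subcategory of `Pro C`. -/
abbrev SPro : Type max u (v + 1) :=
  ObjectProperty.FullSubcategory (IsStrict (C := C))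

variable (C) in
/-- The inclusion functor `SPro(C) ⥤ Pro(C)`. -/
def SProInclusion : SPro C ⥤ Pro C :=
  ObjectProperty.ι _

variable (C) in
/-- The category `SPro_ω(C)` of countably indexed strict pro-objects, as a full
subcategory of `Pro_ω(C)`. -/
abbrev SProOmega : Type max u (v + 1) :=
  ObjectProperty.FullSubcategory (fun X : ProOmega C => IsStrict X.obj)

variable (C) in
/-- The inclusion functor `SPro_ω(C) ⥤ Pro_ω(C)`. -/
def SProOmegaInclusion : SProOmega C ⥤ ProOmega C :=
  ObjectProperty.ι _

/-- The one-point directed poset. -/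
def unitPoset : DirPoset.{v} where
  carrier := PUnit
  nonempty := ⟨PUnit.unit⟩
  directed := ⟨fun a b => ⟨b, le_of_eq (Subsingleton.elim a b), le_refl b⟩⟩

variable (C) in
/-- The canonical fully faithful embedding `C ⥤ Pro C` (via constant diagrams). -/
noncomputable def constPro : C ⥤ Pro C :=
  Functor.const unitPoset.carrierᵒᵖ ⋙ plim C unitPoset

/-- `plimObj` for a countably indexed diagram, as an object of `Pro_ω(C)`. -/
noncomputable def plimOmegaObj {Γ : DirPoset.{v}} (hΓ : Countable Γ.carrier)
    (D : Γ.carrierᵒᵖ ⥤ C) : ProOmega C :=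
  ⟨plimObj D, Γ, hΓ, D, ⟨Iso.refl _⟩⟩

variable (C) in
/-- The functor `plim` into `Pro_ω(C)`, for a countable directed poset. -/
noncomputable def plimOmega (Γ : DirPoset.{v}) (hΓ : Countable Γ.carrier) :
    (Γ.carrierᵒᵖ ⥤ C) ⥤ ProOmega C :=
  ObjectProperty.lift _ (plim C Γ) (fun D => ⟨Γ, hΓ, D, ⟨Iso.refl _⟩⟩)

variable (C) in
/-- The canonical fully faithful embedding `C ⥤ Pro_ω C` (via constant diagrams). -/
noncomputable def constProOmega : C ⥤ ProOmega C :=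
  ObjectProperty.lift _ (constPro C)
    (fun X => ⟨unitPoset, inferInstanceAs (Countable PUnit),
      (Functor.const unitPoset.carrierᵒᵖ).obj X, ⟨Iso.refl _⟩⟩)




/-! ### Auxiliary machinery for Statement 4 -/

section Aux

variable {A : Type u} [Category.{v} A]

/-- Joint surjectivity for pointwise colimits in functor categories into `Type`. -/
lemma colim_jointly_surj {J : Type v} [SmallCategory J] (F : J ⥤ A ⥤ Type v) (X : A)
    (x : (colimit F).obj X) : ∃ j y, (colimit.ι F j).app X y = x := by
  obtain ⟨j, y, hy⟩ := Types.jointly_surjective'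
    ((colimitObjIsoColimitCompEvaluation F X).hom x)
  refine ⟨j, y, ?_⟩
  have h1 := ConcreteCategory.congr_hom (colimitObjIsoColimitCompEvaluation_ι_inv F j X) y
  simp only [types_comp_apply] at h1
  rw [← h1, hy]
  exact ConcreteCategory.congr_hom ((colimitObjIsoColimitCompEvaluation F X).hom_inv_id) x

/-- Equality in pointwise filtered colimits in functor categories into `Type`. -/
lemma colim_eq_extract {J : Type v} [SmallCategory J] [IsFilteredOrEmpty J]
    (F : J ⥤ A ⥤ Type v) (X : A) {i j : J} {x : (F.obj i).obj X} {y : (F.obj j).obj X}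
    (h : (colimit.ι F i).app X x = (colimit.ι F j).app X y) :
    ∃ (k : J) (f : i ⟶ k) (g : j ⟶ k), (F.map f).app X x = (F.map g).app X y := by
  have h' : colimit.ι (F ⋙ (evaluation A (Type v)).obj X) i x
      = colimit.ι (F ⋙ (evaluation A (Type v)).obj X) j y := by
    have h1 := ConcreteCategory.congr_hom (colimitObjIsoColimitCompEvaluation_ι_app_hom F i X) x
    have h2 := ConcreteCategory.congr_hom (colimitObjIsoColimitCompEvaluation_ι_app_hom F j X) y
    simp only [types_comp_apply] at h1 h2
    rw [← h1, ← h2, h]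
  exact (Types.FilteredColimit.colimit_eq_iff _).mp h'

/-- A monotone map with cofinal image induces a final functor. -/
lemma final_monotone_functor {P Q : Type v} [Preorder P] [Preorder Q]
    [IsDirected P (· ≤ ·)] [IsDirected Q (· ≤ ·)]
    {u : P → Q} (hu : Monotone u) (hcof : ∀ q, ∃ p, q ≤ u p) :
    hu.functor.Final :=
  Functor.final_of_exists_of_isFiltered _
    (fun q => by obtain ⟨p, hp⟩ := hcof q; exact ⟨p, ⟨homOfLE hp⟩⟩)
    (fun {q p} s s' => ⟨p, 𝟙 _, by congr 1; exact Subsingleton.elim _ _⟩)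

lemma corep_restrict {P Q : Type v} [Preorder P] [Preorder Q]
    {u : P → Q} (hu : Monotone u) (D : Qᵒᵖ ⥤ A) :
    corepDiagram A (hu.functor.op ⋙ D) = hu.functor ⋙ corepDiagram A D := rfl

/-- Restricting a pro-diagram along a cofinal monotone map does not change the colimit of
corepresentables. -/
noncomputable def restrictColimIso {P Q : Type v} [Preorder P] [Preorder Q]
    [IsDirected P (· ≤ ·)] [IsDirected Q (· ≤ ·)]
    {u : P → Q} (hu : Monotone u) (hcof : ∀ q, ∃ p, q ≤ u p) (D : Qᵒᵖ ⥤ A) :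
    colimit (corepDiagram A (hu.functor.op ⋙ D)) ≅ colimit (corepDiagram A D) := by
  haveI := final_monotone_functor hu hcof
  haveI : HasColimit (hu.functor ⋙ corepDiagram A D) := by
    rw [← corep_restrict]; infer_instance
  exact (HasColimit.isoOfNatIso (eqToIso (corep_restrict hu D))) ≪≫
    Functor.Final.colimitIso hu.functor (corepDiagram A D)

/-- The transition morphism of a pro-diagram. -/
def trm {Q : Type v} [Preorder Q] (D : Qᵒᵖ ⥤ A) {x y : Q} (h : x ≤ y) :
    D.obj (op y) ⟶ D.obj (op x) := D.map (homOfLE h).op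

lemma trm_comp {Q : Type v} [Preorder Q] (D : Qᵒᵖ ⥤ A) {x y z : Q}
    (h1 : x ≤ y) (h2 : y ≤ z) : trm D h2 ≫ trm D h1 = trm D (h1.trans h2) := by
  rw [trm, trm, trm, ← D.map_comp, ← op_comp]
  exact congrArg (fun f => D.map (Quiver.Hom.op f)) (Subsingleton.elim _ _)

lemma trm_refl {Q : Type v} [Preorder Q] (D : Qᵒᵖ ⥤ A) (x : Q) :
    trm D (le_refl x) = 𝟙 _ := D.map_id _

lemma map_eq_trm {Q : Type v} [Preorder Q] (D : Qᵒᵖ ⥤ A) {x y : Q} (φ : x ⟶ y) :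
    D.map φ.op = trm D (leOfHom φ) := by
  rw [trm, Subsingleton.elim φ (homOfLE (leOfHom φ))]

lemma corep_map_eq {Q : Type v} [Preorder Q] (D : Qᵒᵖ ⥤ A) {i j : Q} (φ : i ⟶ j) :
    (corepDiagram A D).map φ = coyoneda.map (trm D (leOfHom φ)).op := by
  rw [← map_eq_trm]; rfl

lemma corep_map_app {Q : Type v} [Preorder Q] (D : Qᵒᵖ ⥤ A) {i j : Q} (φ : i ⟶ j) (X : A)
    (h : D.obj (op i) ⟶ X) :
    ((corepDiagram A D).map φ).app X h = trm D (leOfHom φ) ≫ h := by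
  rw [corep_map_eq]; rfl

lemma corep_obj_map {Q : Type v} [Preorder Q] (D : Qᵒᵖ ⥤ A) (i : Q) {X Y : A}
    (k : X ⟶ Y) (h : D.obj (op i) ⟶ X) :
    ((corepDiagram A D).obj i).map k h = h ≫ k := rfl

/-- Shifting a coyoneda leg of a cocone to a later index. -/
lemma coyoneda_ι_shift {Q : Type v} [Preorder Q] (D : Qᵒᵖ ⥤ A) {i j : Q} (h : i ≤ j)
    {W : A} (uu : D.obj (op i) ⟶ W) :
    coyoneda.map uu.op ≫ colimit.ι (corepDiagram A D) i
      = coyoneda.map (trm D h ≫ uu).op ≫ colimit.ι (corepDiagram A D) j := by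
  rw [← colimit.w (corepDiagram A D) (homOfLE h)]
  refine (Category.assoc _ _ _).symm.trans ?_
  congr 1
  rw [corep_map_eq]
  exact (coyoneda.map_comp _ _).symm

end Aux

section Sequential

/-- A copy of `ℕ` in `Type v`, used as a sequential indexing poset. -/
structure NatP : Type v where
  down : ℕ

instance : PartialOrder NatP.{v} :=
  PartialOrder.lift NatP.down (fun a b h => by cases a; cases b; cases h; rfl)

lemma NatP.mk_le_mk {n m : ℕ} : (⟨n⟩ : NatP.{v}) ≤ ⟨m⟩ ↔ n ≤ m := Iff.rfl

instance : Countable NatP.{v} :=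
  Countable.of_equiv ℕ ⟨NatP.mk, NatP.down, fun _ => rfl, fun _ => rfl⟩

lemma natP_directed : IsDirected NatP.{v} (· ≤ ·) :=
  ⟨fun a b => ⟨⟨max a.down b.down⟩, le_max_left a.down b.down, le_max_right a.down b.down⟩⟩

attribute [local instance] natP_directed

variable {B : Type u'} [Category.{v'} B]

lemma cocone_nat_succ (F : NatP.{v} ⥤ B) {c : B}
    (app : ∀ n : ℕ, F.obj ⟨n⟩ ⟶ c)
    (hsucc : ∀ n : ℕ, F.map (homOfLE (show (⟨n⟩ : NatP.{v}) ≤ ⟨n + 1⟩ from Nat.le_succ n))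
        ≫ app (n + 1) = app n)
    {x y : NatP.{v}} (φ : x ⟶ y) : F.map φ ≫ app y.down = app x.down := by
  obtain ⟨n⟩ := x
  obtain ⟨m⟩ := y
  have h' := leOfHom φ
  have h : n ≤ m := h'
  clear h'
  obtain rfl : φ = homOfLE (show (⟨n⟩ : NatP.{v}) ≤ ⟨m⟩ from h) := Subsingleton.elim _ _
  induction m, h using Nat.le_induction with
  | base =>
      rw [show (homOfLE _ : (⟨n⟩ : NatP.{v}) ⟶ ⟨n⟩) = 𝟙 _ from Subsingleton.elim _ _,
        F.map_id, Category.id_comp]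
  | succ m hm ih =>
      rw [show (homOfLE _ : (⟨n⟩ : NatP.{v}) ⟶ ⟨m + 1⟩)
          = (homOfLE (show (⟨n⟩ : NatP.{v}) ≤ ⟨m⟩ from hm)) ≫
            (homOfLE (show (⟨m⟩ : NatP.{v}) ≤ ⟨m + 1⟩ from Nat.le_succ m))
          from Subsingleton.elim _ _, F.map_comp, Category.assoc, hsucc, ih]

/-- Build a cocone over a `NatP`-indexed diagram from successive compatibilities. -/
def mkCoconeNat (F : NatP.{v} ⥤ B) {c : B}
    (app : ∀ n : ℕ, F.obj ⟨n⟩ ⟶ c)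
    (hsucc : ∀ n : ℕ, F.map (homOfLE (show (⟨n⟩ : NatP.{v}) ≤ ⟨n + 1⟩ from Nat.le_succ n))
        ≫ app (n + 1) = app n) : Cocone F where
  pt := c
  ι := { app := fun γ => app γ.down
         naturality := fun x y φ => by
           rw [cocone_nat_succ F app hsucc φ]
           simp }

@[simp] lemma mkCoconeNat_ι_app (F : NatP.{v} ⥤ B) {c : B}
    (app : ∀ n : ℕ, F.obj ⟨n⟩ ⟶ c) (hsucc) (γ : NatP.{v}) :
    (mkCoconeNat F app hsucc).ι.app γ = app γ.down := rfl

/-- Epimorphy of all transition maps follows from epimorphy of successive ones. -/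
lemma epi_all_of_succ (F : NatP.{v}ᵒᵖ ⥤ B)
    (h : ∀ n : ℕ, Epi (F.map (homOfLE
      (show (⟨n⟩ : NatP.{v}) ≤ ⟨n + 1⟩ from Nat.le_succ n)).op))
    {i j : NatP.{v}ᵒᵖ} (φ : i ⟶ j) : Epi (F.map φ) := by
  obtain ⟨⟨m⟩⟩ := i
  obtain ⟨⟨n⟩⟩ := j
  have h' := leOfHom φ.unop
  have hnm : n ≤ m := h'
  clear h'
  obtain rfl : φ = (homOfLE (show (⟨n⟩ : NatP.{v}) ≤ ⟨m⟩ from hnm)).op :=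
    Subsingleton.elim _ _
  induction m, hnm using Nat.le_induction with
  | base =>
      rw [show ((homOfLE _ : (⟨n⟩ : NatP.{v}) ⟶ ⟨n⟩)).op = 𝟙 _ from
        congrArg _ (Subsingleton.elim _ _), F.map_id]
      infer_instance
  | succ m hm ih =>
      rw [show ((homOfLE _ : (⟨n⟩ : NatP.{v}) ⟶ ⟨m + 1⟩)).op
          = ((homOfLE (show (⟨m⟩ : NatP.{v}) ≤ ⟨m + 1⟩ from Nat.le_succ m)) :
              (⟨m⟩ : NatP.{v}) ⟶ ⟨m + 1⟩).op
            ≫ ((homOfLE (show (⟨n⟩ : NatP.{v}) ≤ ⟨m⟩ from hm)) :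
              (⟨n⟩ : NatP.{v}) ⟶ ⟨m⟩).op from
        congrArg _ (Subsingleton.elim _ _), F.map_comp]
      exact @epi_comp _ _ _ _ _ _ (h m) _ ih

end Sequential

section Key

variable {A : Type u} [Category.{v} A]

attribute [local instance] natP_directed

lemma ι_app_comp {Q : Type v} [Preorder Q] (D : Qᵒᵖ ⥤ A) (q : Q) {X Y : A}
    (x : D.obj (op q) ⟶ X) (k : X ⟶ Y) :
    (colimit.ι (corepDiagram A D) q).app Y (x ≫ k)
      = (colimit (corepDiagram A D)).map k ((colimit.ι (corepDiagram A D) q).app X x) :=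
  NatTrans.naturality_apply (colimit.ι (corepDiagram A D) q) k x

lemma ι_app_shift {Q : Type v} [Preorder Q] (D : Qᵒᵖ ⥤ A) {i j : Q} (h : i ≤ j) {X : A}
    (x : D.obj (op i) ⟶ X) :
    (colimit.ι (corepDiagram A D) i).app X x
      = (colimit.ι (corepDiagram A D) j).app X (trm D h ≫ x) := by
  have h2 := ConcreteCategory.congr_hom (NatTrans.congr_app (colimit.w (corepDiagram A D) (homOfLE h)) X) x
  rw [← h2]
  have h3 : ((corepDiagram A D).map (homOfLE h)).app X x = trm D h ≫ x :=
    corep_map_app D (homOfLE h) X x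
  exact (congrArg ((colimit.ι (corepDiagram A D) j).app X) h3).symm

lemma coy_comp {X Y Z : A} (u : Y ⟶ X) (w : Z ⟶ Y) :
    coyoneda.map u.op ≫ coyoneda.map w.op = coyoneda.map (w ≫ u).op := by
  rw [← Functor.map_comp, ← op_comp]

theorem key {Γ : DirPoset.{v}} {D : Γ.carrierᵒᵖ ⥤ A}
    (hD : ∀ {i j : Γ.carrierᵒᵖ} (f : i ⟶ j), Epi (D.map f))
    (D'' : NatP.{v}ᵒᵖ ⥤ A)
    (θ : colimit (corepDiagram A D'') ≅ colimit (corepDiagram A D)) :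
    ∃ E : NatP.{v}ᵒᵖ ⥤ A,
      (∀ {i j : NatP.{v}ᵒᵖ} (f : i ⟶ j), Epi (E.map f)) ∧
      Nonempty (colimit (corepDiagram A D'') ≅ colimit (corepDiagram A E)) := by
  haveI := Γ.directed
  -- choose representatives for the images of the identities under θ.hom
  have hA : ∀ n : ℕ, ∃ (γ : Γ.carrier) (f : D.obj (op γ) ⟶ D''.obj (op ⟨n⟩)),
      (colimit.ι (corepDiagram A D) γ).app (D''.obj (op ⟨n⟩)) f
        = θ.hom.app (D''.obj (op ⟨n⟩))
            ((colimit.ι (corepDiagram A D'') ⟨n⟩).app (D''.obj (op ⟨n⟩))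
              (𝟙 (D''.obj (op ⟨n⟩)))) :=
    fun n => colim_jointly_surj (corepDiagram A D) _ _
  choose g f hf using hA
  have hB : ∀ γ : Γ.carrier, ∃ (n : ℕ) (gg : D''.obj (op ⟨n⟩) ⟶ D.obj (op γ)),
      (colimit.ι (corepDiagram A D'') ⟨n⟩).app (D.obj (op γ)) gg
        = θ.inv.app (D.obj (op γ))
            ((colimit.ι (corepDiagram A D) γ).app (D.obj (op γ)) (𝟙 (D.obj (op γ)))) := by
    intro γ
    obtain ⟨j, y, hy⟩ := colim_jointly_surj (corepDiagram A D'') _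
      (θ.inv.app (D.obj (op γ))
        ((colimit.ι (corepDiagram A D) γ).app (D.obj (op γ)) (𝟙 (D.obj (op γ)))))
    exact ⟨j.down, y, hy⟩
  choose ng gg hg using hB
  -- compatibility of the chosen f's (relation R3)
  have R3 : ∀ {n m : ℕ} (h : n ≤ m), ∃ (δ : Γ.carrier) (h1 : g n ≤ δ) (h2 : g m ≤ δ),
      trm D h1 ≫ f n
        = trm D h2 ≫ (f m ≫ trm D'' (show (⟨n⟩ : NatP.{v}) ≤ ⟨m⟩ from h)) := by
    intro n m h
    have e1 : (colimit.ι (corepDiagram A D) (g n)).app (D''.obj (op ⟨n⟩)) (f n)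
        = (colimit.ι (corepDiagram A D) (g m)).app (D''.obj (op ⟨n⟩))
            (f m ≫ trm D'' (show (⟨n⟩ : NatP.{v}) ≤ ⟨m⟩ from h)) := by
      rw [hf n]
      have s1 := ι_app_shift D'' (show (⟨n⟩ : NatP.{v}) ≤ ⟨m⟩ from h)
        (𝟙 (D''.obj (op ⟨n⟩)))
      rw [Category.comp_id] at s1
      rw [s1]
      have s2 : (colimit.ι (corepDiagram A D'') ⟨m⟩).app (D''.obj (op ⟨n⟩))
            (trm D'' (show (⟨n⟩ : NatP.{v}) ≤ ⟨m⟩ from h))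
          = (colimit (corepDiagram A D'')).map
              (trm D'' (show (⟨n⟩ : NatP.{v}) ≤ ⟨m⟩ from h))
              ((colimit.ι (corepDiagram A D'') ⟨m⟩).app (D''.obj (op ⟨m⟩)) (𝟙 (D''.obj (op ⟨m⟩)))) := by
        conv_lhs => rw [show trm D'' (show (⟨n⟩ : NatP.{v}) ≤ ⟨m⟩ from h)
          = 𝟙 _ ≫ trm D'' (show (⟨n⟩ : NatP.{v}) ≤ ⟨m⟩ from h) from
            (Category.id_comp _).symm]
        exact ι_app_comp D'' ⟨m⟩ (𝟙 _) _
      rw [s2, NatTrans.naturality_apply θ.hom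
        (trm D'' (show (⟨n⟩ : NatP.{v}) ≤ ⟨m⟩ from h)), ← hf m]
      exact (ι_app_comp D (g m) (f m) _).symm
    obtain ⟨δ, φ, ψ, hd⟩ := colim_eq_extract (corepDiagram A D) _ e1
    rw [corep_map_app, corep_map_app] at hd
    exact ⟨δ, leOfHom φ, leOfHom ψ, hd⟩
  -- relation R2
  have R2 : ∀ γ : Γ.carrier, ∃ (δ : Γ.carrier) (h1 : γ ≤ δ) (h2 : g (ng γ) ≤ δ),
      trm D h1 = trm D h2 ≫ (f (ng γ) ≫ gg γ) := by
    intro γ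
    have e1 : (colimit.ι (corepDiagram A D) γ).app (D.obj (op γ)) (𝟙 (D.obj (op γ)))
        = (colimit.ι (corepDiagram A D) (g (ng γ))).app (D.obj (op γ))
            (f (ng γ) ≫ gg γ) := by
      have t1 : θ.hom.app _
            ((colimit.ι (corepDiagram A D'') ⟨ng γ⟩).app (D.obj (op γ)) (gg γ))
          = (colimit.ι (corepDiagram A D) γ).app (D.obj (op γ)) (𝟙 (D.obj (op γ))) := by
        rw [hg γ]
        exact ConcreteCategory.congr_hom (θ.inv_hom_id_app _) _
      rw [← t1]
      have s2 : (colimit.ι (corepDiagram A D'') ⟨ng γ⟩).app (D.obj (op γ)) (gg γ)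
          = (colimit (corepDiagram A D'')).map (gg γ)
              ((colimit.ι (corepDiagram A D'') ⟨ng γ⟩).app (D''.obj (op ⟨ng γ⟩)) (𝟙 (D''.obj (op ⟨ng γ⟩)))) := by
        conv_lhs => rw [show gg γ = 𝟙 _ ≫ gg γ from (Category.id_comp _).symm]
        exact ι_app_comp D'' ⟨ng γ⟩ (𝟙 _) _
      rw [s2, NatTrans.naturality_apply θ.hom (gg γ), ← hf (ng γ)]
      exact (ι_app_comp D (g (ng γ)) (f (ng γ)) _).symm
    obtain ⟨δ, φ, ψ, hd⟩ := colim_eq_extract (corepDiagram A D) _ e1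
    rw [corep_map_app, corep_map_app, Category.comp_id] at hd
    exact ⟨δ, leOfHom φ, leOfHom ψ, hd⟩
  -- relation R1
  have R1 : ∀ n : ℕ, ∃ (m : ℕ) (h1 : n ≤ m) (h2 : ng (g n) ≤ m),
      trm D'' (show (⟨n⟩ : NatP.{v}) ≤ ⟨m⟩ from h1)
        = trm D'' (show (⟨ng (g n)⟩ : NatP.{v}) ≤ ⟨m⟩ from h2) ≫ (gg (g n) ≫ f n) := by
    intro n
    have e1 : (colimit.ι (corepDiagram A D'') ⟨n⟩).app (D''.obj (op ⟨n⟩)) (𝟙 (D''.obj (op ⟨n⟩)))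
        = (colimit.ι (corepDiagram A D'') ⟨ng (g n)⟩).app (D''.obj (op ⟨n⟩))
            (gg (g n) ≫ f n) := by
      have t1 : θ.inv.app _
            ((colimit.ι (corepDiagram A D) (g n)).app (D''.obj (op ⟨n⟩)) (f n))
          = (colimit.ι (corepDiagram A D'') ⟨n⟩).app (D''.obj (op ⟨n⟩)) (𝟙 (D''.obj (op ⟨n⟩))) := by
        rw [hf n]
        exact ConcreteCategory.congr_hom (θ.hom_inv_id_app _) _
      rw [← t1]
      have s2 : (colimit.ι (corepDiagram A D) (g n)).app (D''.obj (op ⟨n⟩)) (f n)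
          = (colimit (corepDiagram A D)).map (f n)
              ((colimit.ι (corepDiagram A D) (g n)).app (D.obj (op (g n))) (𝟙 (D.obj (op (g n))))) := by
        conv_lhs => rw [show f n = 𝟙 _ ≫ f n from (Category.id_comp _).symm]
        exact ι_app_comp D (g n) (𝟙 _) _
      rw [s2, NatTrans.naturality_apply θ.inv (f n), ← hg (g n)]
      exact (ι_app_comp D'' ⟨ng (g n)⟩ (gg (g n)) _).symm
    obtain ⟨κ, φ, ψ, hd⟩ := colim_eq_extract (corepDiagram A D'') _ e1
    rw [corep_map_app, corep_map_app, Category.comp_id] at hd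
    have l1 := leOfHom φ
    have l2 := leOfHom ψ
    exact ⟨κ.down, l1, l2, hd⟩
  -- the combined recursion step
  have KEY : ∀ n n₀ : ℕ, ∃ m : ℕ, n₀ < m ∧ ∃ (hnm : n ≤ m)
      (p : D''.obj (op ⟨m⟩) ⟶ D.obj (op (g n))),
      (p ≫ f n = trm D'' (show (⟨n⟩ : NatP.{v}) ≤ ⟨m⟩ from hnm)) ∧
      ∃ (δ : Γ.carrier) (h1 : g n ≤ δ) (h2 : g m ≤ δ),
        trm D h1 = trm D h2 ≫ (f m ≫ p) := by
    intro n n₀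
    obtain ⟨m₁, hm1, hm2, hr1⟩ := R1 n
    refine ⟨max m₁ n₀ + 1, by omega, by omega, ?_⟩
    have hm1m : m₁ ≤ max m₁ n₀ + 1 := by omega
    have hNm : ng (g n) ≤ max m₁ n₀ + 1 := hm2.trans hm1m
    have hnm : n ≤ max m₁ n₀ + 1 := hm1.trans hm1m
    refine ⟨trm D'' (show (⟨ng (g n)⟩ : NatP.{v}) ≤ ⟨max m₁ n₀ + 1⟩ from hNm) ≫ gg (g n),
      ?_, ?_⟩
    · have c1 : trm D'' (show (⟨m₁⟩ : NatP.{v}) ≤ ⟨max m₁ n₀ + 1⟩ from hm1m)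
          ≫ trm D'' (show (⟨ng (g n)⟩ : NatP.{v}) ≤ ⟨m₁⟩ from hm2)
          = trm D'' (show (⟨ng (g n)⟩ : NatP.{v}) ≤ ⟨max m₁ n₀ + 1⟩ from hNm) :=
        trm_comp D'' _ _
      calc (trm D'' (show (⟨ng (g n)⟩ : NatP.{v}) ≤ ⟨max m₁ n₀ + 1⟩ from hNm) ≫ gg (g n))
            ≫ f n
          = (trm D'' (show (⟨m₁⟩ : NatP.{v}) ≤ ⟨max m₁ n₀ + 1⟩ from hm1m)
              ≫ trm D'' (show (⟨ng (g n)⟩ : NatP.{v}) ≤ ⟨m₁⟩ from hm2)) ≫ (gg (g n) ≫ f n) := by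
            rw [c1, Category.assoc]
        _ = trm D'' (show (⟨m₁⟩ : NatP.{v}) ≤ ⟨max m₁ n₀ + 1⟩ from hm1m)
              ≫ (trm D'' (show (⟨ng (g n)⟩ : NatP.{v}) ≤ ⟨m₁⟩ from hm2) ≫ (gg (g n) ≫ f n)) := by
            rw [Category.assoc]
        _ = trm D'' (show (⟨m₁⟩ : NatP.{v}) ≤ ⟨max m₁ n₀ + 1⟩ from hm1m)
              ≫ trm D'' (show (⟨n⟩ : NatP.{v}) ≤ ⟨m₁⟩ from hm1) := by
            rw [← hr1]
        _ = trm D'' (show (⟨n⟩ : NatP.{v}) ≤ ⟨max m₁ n₀ + 1⟩ from hnm) := trm_comp D'' _ _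
    · obtain ⟨δ₁, hδ1N, hδ1m, e3⟩ := R3 hNm
      obtain ⟨δ₂, hδ2γ, hδ2N, e2⟩ := R2 (g n)
      obtain ⟨δ, hδ1, hδ2⟩ := directed_of (· ≤ ·) δ₁ δ₂
      refine ⟨δ, hδ2γ.trans hδ2, hδ1m.trans hδ1, ?_⟩
      calc trm D (hδ2γ.trans hδ2)
          = trm D hδ2 ≫ trm D hδ2γ := (trm_comp D _ _).symm
        _ = trm D hδ2 ≫ (trm D hδ2N ≫ (f (ng (g n)) ≫ gg (g n))) := by rw [e2]
        _ = (trm D hδ2 ≫ trm D hδ2N) ≫ (f (ng (g n)) ≫ gg (g n)) := by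
            rw [Category.assoc]
        _ = (trm D hδ1 ≫ trm D hδ1N) ≫ (f (ng (g n)) ≫ gg (g n)) := by
            rw [trm_comp D hδ2N hδ2, trm_comp D hδ1N hδ1]
        _ = trm D hδ1 ≫ ((trm D hδ1N ≫ f (ng (g n))) ≫ gg (g n)) := by
            simp only [Category.assoc]
        _ = trm D hδ1 ≫ ((trm D hδ1m
              ≫ (f (max m₁ n₀ + 1)
                  ≫ trm D'' (show (⟨ng (g n)⟩ : NatP.{v}) ≤ ⟨max m₁ n₀ + 1⟩ from hNm)))
              ≫ gg (g n)) := by rw [e3]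
        _ = (trm D hδ1 ≫ trm D hδ1m) ≫ (f (max m₁ n₀ + 1)
              ≫ (trm D'' (show (⟨ng (g n)⟩ : NatP.{v}) ≤ ⟨max m₁ n₀ + 1⟩ from hNm)
                  ≫ gg (g n))) := by simp only [Category.assoc]
        _ = trm D (hδ1m.trans hδ1) ≫ (f (max m₁ n₀ + 1)
              ≫ (trm D'' (show (⟨ng (g n)⟩ : NatP.{v}) ≤ ⟨max m₁ n₀ + 1⟩ from hNm)
                  ≫ gg (g n))) := by rw [trm_comp D hδ1m hδ1]
  -- build the interleaving sequence by recursion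
  let a : ℕ → ℕ := fun k => Nat.rec 0 (fun k ak => (KEY ak ak).choose) k
  have halt : ∀ k, a k < a (k + 1) := fun k => (KEY (a k) (a k)).choose_spec.1
  have hmono : StrictMono a := strictMono_nat_of_lt_succ halt
  have hage : ∀ n, n ≤ a n := fun n => hmono.le_apply
  have hspec : ∀ k, ∃ (hnm : a k ≤ a (k + 1))
      (p : D''.obj (op ⟨a (k + 1)⟩) ⟶ D.obj (op (g (a k)))),
      (p ≫ f (a k) = trm D'' (show (⟨a k⟩ : NatP.{v}) ≤ ⟨a (k + 1)⟩ from hnm)) ∧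
      ∃ (δ : Γ.carrier) (h1 : g (a k) ≤ δ) (h2 : g (a (k + 1)) ≤ δ),
        trm D h1 = trm D h2 ≫ (f (a (k + 1)) ≫ p) :=
    fun k => (KEY (a k) (a k)).choose_spec.2
  choose hle p hp1 hp2 using hspec
  -- the epimorphic transition maps
  have hepi : ∀ k, Epi (f (a (k + 1)) ≫ p k) := by
    intro k
    obtain ⟨δ, h1, h2, he⟩ := hp2 k
    haveI : Epi (trm D h2 ≫ (f (a (k + 1)) ≫ p k)) := by
      rw [← he]; exact hD _
    exact epi_of_epi (trm D h2) _
  -- the countable strict diagram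
  let e : ∀ k : ℕ, D.obj (op (g (a (k + 1)))) ⟶ D.obj (op (g (a k))) :=
    fun k => f (a (k + 1)) ≫ p k
  let Eseq : ℕᵒᵖ ⥤ A := Functor.ofOpSequence (X := fun k => D.obj (op (g (a k)))) e
  have hdn : Monotone (fun x : NatP.{v} => x.down) := fun x y h => h
  let E : NatP.{v}ᵒᵖ ⥤ A := hdn.functor.op ⋙ Eseq
  have hE1 : ∀ k : ℕ, trm E (show (⟨k⟩ : NatP.{v}) ≤ ⟨k + 1⟩ from Nat.le_succ k) = e k :=
    fun k => Functor.ofOpSequence_map_homOfLE_succ (X := fun k => D.obj (op (g (a k)))) e k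
  -- all transition maps of E
  have hEmap : ∀ (k m : ℕ) (h : k + 1 ≤ m),
      trm E (show (⟨k⟩ : NatP.{v}) ≤ ⟨m⟩ from (Nat.le_succ k).trans h)
        = f (a m) ≫ (trm D'' (show (⟨a (k + 1)⟩ : NatP.{v}) ≤ ⟨a m⟩ from hmono.monotone h)
            ≫ p k) := by
    intro k m h
    induction m, h using Nat.le_induction with
    | base =>
        have : trm D'' (show (⟨a (k + 1)⟩ : NatP.{v}) ≤ ⟨a (k + 1)⟩ from le_refl _)
            = 𝟙 _ := trm_refl D'' _
        rw [this, Category.id_comp]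
        exact hE1 k
    | succ m hm ih =>
        have c : trm E (show (⟨m⟩ : NatP.{v}) ≤ ⟨m + 1⟩ from Nat.le_succ m)
            ≫ trm E (show (⟨k⟩ : NatP.{v}) ≤ ⟨m⟩ from (Nat.le_succ k).trans hm)
            = trm E (show (⟨k⟩ : NatP.{v}) ≤ ⟨m + 1⟩ from
                (Nat.le_succ k).trans (hm.trans (Nat.le_succ m))) := trm_comp E _ _
        rw [← c, hE1 m, ih]
        show (f (a (m + 1)) ≫ p m) ≫ (f (a m)
            ≫ (trm D'' (show (⟨a (k + 1)⟩ : NatP.{v}) ≤ ⟨a m⟩ from hmono.monotone hm) ≫ p k))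
          = _
        calc (f (a (m + 1)) ≫ p m) ≫ (f (a m)
              ≫ (trm D'' (show (⟨a (k + 1)⟩ : NatP.{v}) ≤ ⟨a m⟩ from hmono.monotone hm) ≫ p k))
            = f (a (m + 1)) ≫ ((p m ≫ f (a m))
              ≫ (trm D'' (show (⟨a (k + 1)⟩ : NatP.{v}) ≤ ⟨a m⟩ from hmono.monotone hm) ≫ p k)) := by
              simp only [Category.assoc]
          _ = f (a (m + 1)) ≫ (trm D'' (show (⟨a m⟩ : NatP.{v}) ≤ ⟨a (m + 1)⟩ from hle m)
              ≫ (trm D'' (show (⟨a (k + 1)⟩ : NatP.{v}) ≤ ⟨a m⟩ from hmono.monotone hm) ≫ p k)) := by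
              rw [hp1 m]
          _ = f (a (m + 1)) ≫ ((trm D'' (show (⟨a m⟩ : NatP.{v}) ≤ ⟨a (m + 1)⟩ from hle m)
              ≫ trm D'' (show (⟨a (k + 1)⟩ : NatP.{v}) ≤ ⟨a m⟩ from hmono.monotone hm)) ≫ p k) := by
              simp only [Category.assoc]
          _ = f (a (m + 1)) ≫ (trm D'' (show (⟨a (k + 1)⟩ : NatP.{v}) ≤ ⟨a (m + 1)⟩ from
                hmono.monotone (hm.trans (Nat.le_succ m))) ≫ p k) := by
              rw [trm_comp D'']
  -- the two comparison maps between the colimits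
  have hsuccPhi : ∀ n : ℕ, (corepDiagram A E).map
        (homOfLE (show (⟨n⟩ : NatP.{v}) ≤ ⟨n + 1⟩ from Nat.le_succ n))
      ≫ (coyoneda.map (p (n + 1)).op ≫ colimit.ι (corepDiagram A D'') ⟨a (n + 1 + 1)⟩)
      = coyoneda.map (p n).op ≫ colimit.ι (corepDiagram A D'') ⟨a (n + 1)⟩ := by
    intro n
    rw [corep_map_eq]
    refine (Category.assoc _ _ _).symm.trans ?_
    refine (congrArg (· ≫ colimit.ι (corepDiagram A D'') ⟨a (n + 1 + 1)⟩) (coy_comp _ _)).trans ?_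
    have key1 : p (n + 1) ≫ trm E (leOfHom (homOfLE
          (show (⟨n⟩ : NatP.{v}) ≤ ⟨n + 1⟩ from Nat.le_succ n)))
        = trm D'' (show (⟨a (n + 1)⟩ : NatP.{v}) ≤ ⟨a (n + 1 + 1)⟩ from hle (n + 1))
            ≫ p n := by
      rw [hE1 n]
      show p (n + 1) ≫ (f (a (n + 1)) ≫ p n) = _
      rw [← Category.assoc, hp1 (n + 1)]
    refine (congrArg (fun (t : D''.obj (op ⟨a (n + 1 + 1)⟩) ⟶ E.obj (op ⟨n⟩)) =>
      coyoneda.map t.op ≫ colimit.ι (corepDiagram A D'') ⟨a (n + 1 + 1)⟩) key1).trans ?_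
    exact (coyoneda_ι_shift D''
      (show (⟨a (n + 1)⟩ : NatP.{v}) ≤ ⟨a (n + 1 + 1)⟩ from hle (n + 1)) (p n)).symm
  have hsuccPsi : ∀ n : ℕ, (corepDiagram A D'').map
        (homOfLE (show (⟨n⟩ : NatP.{v}) ≤ ⟨n + 1⟩ from Nat.le_succ n))
      ≫ (coyoneda.map ((f (a (n + 1))
            ≫ trm D'' (show (⟨n + 1⟩ : NatP.{v}) ≤ ⟨a (n + 1)⟩ from hage (n + 1)))).op
          ≫ colimit.ι (corepDiagram A E) ⟨n + 1⟩)
      = coyoneda.map ((f (a n)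
            ≫ trm D'' (show (⟨n⟩ : NatP.{v}) ≤ ⟨a n⟩ from hage n))).op
          ≫ colimit.ι (corepDiagram A E) ⟨n⟩ := by
    intro n
    rw [corep_map_eq]
    refine (Category.assoc _ _ _).symm.trans ?_
    refine (congrArg (· ≫ colimit.ι (corepDiagram A E) ⟨n + 1⟩) (coy_comp _ _)).trans ?_
    have key2 : (f (a (n + 1))
          ≫ trm D'' (show (⟨n + 1⟩ : NatP.{v}) ≤ ⟨a (n + 1)⟩ from hage (n + 1)))
          ≫ trm D'' (leOfHom (homOfLE
            (show (⟨n⟩ : NatP.{v}) ≤ ⟨n + 1⟩ from Nat.le_succ n)))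
        = trm E (show (⟨n⟩ : NatP.{v}) ≤ ⟨n + 1⟩ from Nat.le_succ n)
            ≫ (f (a n) ≫ trm D'' (show (⟨n⟩ : NatP.{v}) ≤ ⟨a n⟩ from hage n)) := by
      rw [hE1 n]
      calc (f (a (n + 1))
            ≫ trm D'' (show (⟨n + 1⟩ : NatP.{v}) ≤ ⟨a (n + 1)⟩ from hage (n + 1)))
            ≫ trm D'' (leOfHom (homOfLE
              (show (⟨n⟩ : NatP.{v}) ≤ ⟨n + 1⟩ from Nat.le_succ n)))
          = f (a (n + 1))
              ≫ (trm D'' (show (⟨n + 1⟩ : NatP.{v}) ≤ ⟨a (n + 1)⟩ from hage (n + 1))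
                ≫ trm D'' (show (⟨n⟩ : NatP.{v}) ≤ ⟨n + 1⟩ from Nat.le_succ n)) := by
            rw [Category.assoc]
        _ = f (a (n + 1)) ≫ trm D'' (show (⟨n⟩ : NatP.{v}) ≤ ⟨a (n + 1)⟩ from
              (Nat.le_succ n).trans (hage (n + 1))) := by rw [trm_comp D'']
        _ = f (a (n + 1)) ≫ (trm D'' (show (⟨a n⟩ : NatP.{v}) ≤ ⟨a (n + 1)⟩ from hle n)
              ≫ trm D'' (show (⟨n⟩ : NatP.{v}) ≤ ⟨a n⟩ from hage n)) := by rw [trm_comp D'']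
        _ = (f (a (n + 1)) ≫ (p n ≫ f (a n)))
              ≫ trm D'' (show (⟨n⟩ : NatP.{v}) ≤ ⟨a n⟩ from hage n) := by
            rw [hp1 n, Category.assoc]
        _ = (f (a (n + 1)) ≫ p n) ≫ (f (a n)
              ≫ trm D'' (show (⟨n⟩ : NatP.{v}) ≤ ⟨a n⟩ from hage n)) := by
            simp only [Category.assoc]
        _ = e n ≫ (f (a n)
              ≫ trm D'' (show (⟨n⟩ : NatP.{v}) ≤ ⟨a n⟩ from hage n)) := rfl
    refine (congrArg (fun (t : E.obj (op ⟨n + 1⟩) ⟶ D''.obj (op ⟨n⟩)) =>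
      coyoneda.map t.op ≫ colimit.ι (corepDiagram A E) ⟨n + 1⟩) key2).trans ?_
    exact (coyoneda_ι_shift E (show (⟨n⟩ : NatP.{v}) ≤ ⟨n + 1⟩ from Nat.le_succ n)
      (f (a n) ≫ trm D'' (show (⟨n⟩ : NatP.{v}) ≤ ⟨a n⟩ from hage n))).symm
  let conePhi : Cocone (corepDiagram A E) := mkCoconeNat (corepDiagram A E)
    (fun k => coyoneda.map (p k).op ≫ colimit.ι (corepDiagram A D'') ⟨a (k + 1)⟩) hsuccPhi
  let conePsi : Cocone (corepDiagram A D'') := mkCoconeNat (corepDiagram A D'')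
    (fun n => coyoneda.map ((f (a n)
        ≫ trm D'' (show (⟨n⟩ : NatP.{v}) ≤ ⟨a n⟩ from hage n))).op
      ≫ colimit.ι (corepDiagram A E) ⟨n⟩) hsuccPsi
  let Phi : colimit (corepDiagram A E) ⟶ colimit (corepDiagram A D'') :=
    colimit.desc _ conePhi
  let Psi : colimit (corepDiagram A D'') ⟶ colimit (corepDiagram A E) :=
    colimit.desc _ conePsi
  have hPsiPhi : Psi ≫ Phi = 𝟙 _ := by
    apply colimit.hom_ext
    intro j
    obtain ⟨n⟩ := j
    rw [Category.comp_id]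
    refine (Category.assoc _ _ _).symm.trans ?_
    refine (congrArg (· ≫ Phi) (colimit.ι_desc conePsi ⟨n⟩)).trans ?_
    show (coyoneda.map _ ≫ colimit.ι (corepDiagram A E) ⟨n⟩) ≫ Phi = _
    refine (Category.assoc _ _ _).trans ?_
    refine (whisker_eq _ (colimit.ι_desc conePhi ⟨n⟩)).trans ?_
    show coyoneda.map _ ≫ (coyoneda.map (p n).op ≫ colimit.ι (corepDiagram A D'') ⟨a (n + 1)⟩)
      = _
    refine (Category.assoc _ _ _).symm.trans ?_
    refine (congrArg (· ≫ colimit.ι (corepDiagram A D'') ⟨a (n + 1)⟩) (coy_comp _ _)).trans ?_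
    have hpn : p n ≫ (f (a n) ≫ trm D'' (show (⟨n⟩ : NatP.{v}) ≤ ⟨a n⟩ from hage n))
        = trm D'' (show (⟨n⟩ : NatP.{v}) ≤ ⟨a (n + 1)⟩ from
            (hage n).trans (hle n)) := by
      rw [← Category.assoc, hp1 n, trm_comp D'']
    refine (congrArg (fun (t : D''.obj (op ⟨a (n + 1)⟩) ⟶ D''.obj (op ⟨n⟩)) =>
      coyoneda.map t.op ≫ colimit.ι (corepDiagram A D'') ⟨a (n + 1)⟩)
      (hpn.trans (Category.comp_id _).symm)).trans ?_
    have hsh := coyoneda_ι_shift D'' (show (⟨n⟩ : NatP.{v}) ≤ ⟨a (n + 1)⟩ from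
      (hage n).trans (hle n)) (𝟙 (D''.obj (op ⟨n⟩)))
    refine hsh.symm.trans ?_
    exact (eq_whisker (coyoneda.map_id _) _).trans (Category.id_comp _)
  have hPhiPsi : Phi ≫ Psi = 𝟙 _ := by
    apply colimit.hom_ext
    intro j
    obtain ⟨k⟩ := j
    rw [Category.comp_id]
    refine (Category.assoc _ _ _).symm.trans ?_
    refine (congrArg (· ≫ Psi) (colimit.ι_desc conePhi ⟨k⟩)).trans ?_
    show (coyoneda.map (p k).op ≫ colimit.ι (corepDiagram A D'') ⟨a (k + 1)⟩) ≫ Psi = _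
    refine (Category.assoc _ _ _).trans ?_
    refine (whisker_eq _ (colimit.ι_desc conePsi ⟨a (k + 1)⟩)).trans ?_
    show coyoneda.map (p k).op ≫ (coyoneda.map ((f (a (a (k + 1)))
        ≫ trm D'' (show (⟨a (k + 1)⟩ : NatP.{v}) ≤ ⟨a (a (k + 1))⟩ from hage (a (k + 1))))).op
      ≫ colimit.ι (corepDiagram A E) ⟨a (k + 1)⟩) = _
    refine (Category.assoc _ _ _).symm.trans ?_
    refine (congrArg (· ≫ colimit.ι (corepDiagram A E) ⟨a (k + 1)⟩) (coy_comp _ _)).trans ?_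
    have hwp : (f (a (a (k + 1)))
          ≫ trm D'' (show (⟨a (k + 1)⟩ : NatP.{v}) ≤ ⟨a (a (k + 1))⟩ from hage (a (k + 1))))
          ≫ p k
        = trm E (show (⟨k⟩ : NatP.{v}) ≤ ⟨a (k + 1)⟩ from
            (Nat.le_succ k).trans (hage (k + 1))) := by
      rw [Category.assoc]
      exact (hEmap k (a (k + 1)) (hage (k + 1))).symm
    refine (congrArg (fun (t : E.obj (op ⟨a (k + 1)⟩) ⟶ E.obj (op ⟨k⟩)) =>
      coyoneda.map t.op ≫ colimit.ι (corepDiagram A E) ⟨a (k + 1)⟩)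
      (hwp.trans (Category.comp_id _).symm)).trans ?_
    have hsh := coyoneda_ι_shift E (show (⟨k⟩ : NatP.{v}) ≤ ⟨a (k + 1)⟩ from
      (Nat.le_succ k).trans (hage (k + 1))) (𝟙 (E.obj (op ⟨k⟩)))
    refine hsh.symm.trans ?_
    exact (eq_whisker (coyoneda.map_id _) _).trans (Category.id_comp _)
  refine ⟨E, ?_, ⟨⟨Psi, Phi, hPsiPhi, hPhiPsi⟩⟩⟩
  intro i j φ
  refine epi_all_of_succ E (fun n => ?_) φ
  have h2 : trm E (show (⟨n⟩ : NatP.{v}) ≤ ⟨n + 1⟩ from Nat.le_succ n)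
      = f (a (n + 1)) ≫ p n := hE1 n
  have := hepi n
  rwa [← h2] at this

end Key

section Assembly

variable {C : Type u} [Category.{v} C]

/-- An isomorphism of colimits of corepresentable diagrams induces an isomorphism
of the associated pro-objects. -/
noncomputable def plimIsoOfColimIso {Γ₁ Γ₂ : DirPoset.{v}}
    {D₁ : Γ₁.carrierᵒᵖ ⥤ C} {D₂ : Γ₂.carrierᵒᵖ ⥤ C}
    (e : colimit (corepDiagram C D₁) ≅ colimit (corepDiagram C D₂)) :
    plimObj D₁ ≅ plimObj D₂ where
  hom := Quiver.Hom.op (show (plimObj D₂).unop ⟶ (plimObj D₁).unop from ObjectProperty.homMk e.inv)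
  inv := Quiver.Hom.op (show (plimObj D₁).unop ⟶ (plimObj D₂).unop from ObjectProperty.homMk e.hom)
  hom_inv_id := by
    exact congrArg Quiver.Hom.op (ObjectProperty.hom_ext _ e.hom_inv_id)
  inv_hom_id := by
    exact congrArg Quiver.Hom.op (ObjectProperty.hom_ext _ e.inv_hom_id)

/-- An isomorphism of pro-objects induces an isomorphism of the colimits of the
corepresentable diagrams. -/
noncomputable def colimIsoOfPlimIso {Γ₁ Γ₂ : DirPoset.{v}}
    {D₁ : Γ₁.carrierᵒᵖ ⥤ C} {D₂ : Γ₂.carrierᵒᵖ ⥤ C}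
    (e : plimObj D₁ ≅ plimObj D₂) :
    colimit (corepDiagram C D₂) ≅ colimit (corepDiagram C D₁) :=
  (ObjectProperty.ι (IsProFunctor C)).mapIso e.unop

/-- Every countable nonempty directed poset admits a monotone cofinal sequence. -/
lemma exists_cofinal_seq (Γ' : DirPoset.{v}) (hc : Countable Γ'.carrier) :
    ∃ u : ℕ → Γ'.carrier, Monotone u ∧ ∀ γ, ∃ n, γ ≤ u n := by
  haveI := Γ'.directed
  haveI := Γ'.nonempty
  haveI := hc
  obtain ⟨x, hx⟩ := exists_surjective_nat Γ'.carrier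
  have hub : ∀ a b : Γ'.carrier, ∃ c, a ≤ c ∧ b ≤ c := fun a b =>
    directed_of (· ≤ ·) a b
  choose ub h1 h2 using hub
  refine ⟨fun n => Nat.rec (x 0) (fun n un => ub un (x (n + 1))) n,
    monotone_nat_of_le_succ (fun n => h1 _ _), fun γ => ?_⟩
  obtain ⟨n, rfl⟩ := hx γ
  cases n with
  | zero => exact ⟨0, le_refl _⟩
  | succ n => exact ⟨n + 1, h2 _ _⟩

end Assembly

/-- For an abelian category `A`, a pro-object belonging to `Pro_ω A` is
strict if and only if it can be represented by a diagram of epimorphisms in `A` indexed by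
the opposite of a *countable* directed poset. -/
theorem statement_4 (A : Type u) [Category.{v} A] [Abelian A]
    (X : Pro A) (hX : InProOmega X) :
    IsStrict X ↔
      ∃ (Γ : DirPoset.{v}), Countable Γ.carrier ∧
        ∃ D : Γ.carrierᵒᵖ ⥤ A,
          (∀ {i j : Γ.carrierᵒᵖ} (f : i ⟶ j), Epi (D.map f)) ∧
          Nonempty (X ≅ plimObj D) := by
  constructor
  · rintro ⟨Γ, D, hD, ⟨isoX⟩⟩
    obtain ⟨Γ', hc, D', ⟨isoX'⟩⟩ := hX
    haveI := Γ'.directed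
    haveI := natP_directed.{v}
    obtain ⟨u0, hu0m, hu0c⟩ := exists_cofinal_seq Γ' hc
    have hum : Monotone (fun x : NatP.{v} => u0 x.down) := fun x y h => hu0m h
    have hcof : ∀ q, ∃ pp : NatP.{v}, q ≤ u0 pp.down := fun q => by
      obtain ⟨n, hn⟩ := hu0c q
      exact ⟨⟨n⟩, hn⟩
    have res : colimit (corepDiagram A (hum.functor.op ⋙ D'))
        ≅ colimit (corepDiagram A D') := restrictColimIso hum hcof D'
    have θ0 : colimit (corepDiagram A D') ≅ colimit (corepDiagram A D) :=
      (colimIsoOfPlimIso (isoX'.symm ≪≫ isoX)).symm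
    obtain ⟨E, hE, ⟨ε⟩⟩ := key hD (hum.functor.op ⋙ D') (res ≪≫ θ0)
    let ΓN : DirPoset.{v} :=
      { carrier := NatP.{v}, nonempty := ⟨⟨0⟩⟩, directed := natP_directed }
    refine ⟨ΓN, inferInstanceAs (Countable NatP.{v}), E, hE,
      ⟨isoX' ≪≫ plimIsoOfColimIso (Γ₂ := ΓN) res.symm
        ≪≫ plimIsoOfColimIso (Γ₁ := ΓN) (Γ₂ := ΓN) ε⟩⟩
  · rintro ⟨Γ, hc, D, hD, hiso⟩
    exact ⟨Γ, D, hD, hiso⟩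

end ProPaper
end

section
/- Let C be a category with finite products. Then for any countable family of objects D_n ∈ Pro_ω(C), indexed by n ∈ ℕ, and any object C of C, every morphism ∏_{n∈ℕ} D_n → C in Pro(C) (the product being taken in Pro(C)) factors through a finite subproduct: there exists m ∈ ℕ such that the morphism equals the composite of the canonical subproduct projection ∏_{n∈ℕ} D_n → ∏_{n=0}^{m} D_n with some morphism ∏_{n=0}^{m} D_n → C. -/
open CategoryTheory CategoryTheory.Limits Opposite

universe v u u'

namespace ProPaper

variable (C : Type u) [Category.{v} C]

variable {C}

attribute [reducible] corepDiagram plimObj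

section Auxiliary

variable {C : Type u} [Category.{v} C]
variable {C : Type u} [Category.{v} C]

section HomFramework

/-- Parallel morphisms in the opposite of a preorder category are equal. -/
lemma op_hom_eq {α : Type*} [Preorder α] {x y : αᵒᵖ} (f g : x ⟶ y) : f = g :=
  Quiver.Hom.unop_inj (Subsingleton.elim _ _)

variable {Γ : DirPoset.{v}} (E : Γ.carrierᵒᵖ ⥤ C)

/-- Build a morphism into `plimObj E` from a natural transformation. -/
noncomputable def ofNat {Q : Pro C} (η : colimit (corepDiagram C E) ⟶ Q.unop.obj) : Q ⟶ plimObj E :=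
  Quiver.Hom.op (X := (plimObj E).unop) (Y := Q.unop) (ObjectProperty.homMk η)

@[simp] lemma ofNat_unop {Q : Pro C} (η : colimit (corepDiagram C E) ⟶ Q.unop.obj) :
    (ofNat E η).unop.hom = η := rfl

/-- The section associated to a morphism `Q ⟶ plimObj E`. -/
noncomputable def secOf {Q : Pro C} (f : Q ⟶ plimObj E) (γ : Γ.carrierᵒᵖ) :
    Q.unop.obj.obj (E.obj γ) :=
  coyonedaEquiv (colimit.ι (corepDiagram C E) γ.unop ≫
    (f.unop.hom : colimit (corepDiagram C E) ⟶ Q.unop.obj))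

lemma secOf_compat {Q : Pro C} (f : Q ⟶ plimObj E) {γ γ' : Γ.carrierᵒᵖ} (h : γ ⟶ γ') :
    Q.unop.obj.map (E.map h) (secOf E f γ) = secOf E f γ' := by
  dsimp [secOf]
  rw [coyonedaEquiv_naturality, ← Category.assoc,
    show coyoneda.map (E.map h).op ≫ colimit.ι (corepDiagram C E) γ.unop =
      colimit.ι (corepDiagram C E) γ'.unop from colimit.w (corepDiagram C E) h.unop]

lemma secOf_hom_ext {Q : Pro C} {f f' : Q ⟶ plimObj E}
    (h : ∀ γ, secOf E f γ = secOf E f' γ) : f = f' := by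
  apply Quiver.Hom.unop_inj
  apply ObjectProperty.hom_ext
  exact colimit.hom_ext (F := corepDiagram C E) (X := Q.unop.obj)
    (fun γ => coyonedaEquiv.injective (h (op γ)))

/-- Build a morphism `Q ⟶ plimObj E` out of a compatible family of elements. -/
noncomputable def homOfSec {Q : Pro C} (x : ∀ γ : Γ.carrierᵒᵖ, Q.unop.obj.obj (E.obj γ))
    (hx : ∀ {γ γ' : Γ.carrierᵒᵖ} (h : γ ⟶ γ'), Q.unop.obj.map (E.map h) (x γ) = x γ') :
    Q ⟶ plimObj E :=
  ofNat E <| colimit.desc (corepDiagram C E)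
    { pt := Q.unop.obj
      ι :=
        { app := fun γ => coyonedaEquiv.symm (x (op γ))
          naturality := fun γ γ' h => by
            dsimp [corepDiagram]
            rw [Category.comp_id]
            rw [← hx (h.op : op γ' ⟶ op γ), coyonedaEquiv_symm_map] } }

@[simp] lemma secOf_homOfSec {Q : Pro C} (x : ∀ γ : Γ.carrierᵒᵖ, Q.unop.obj.obj (E.obj γ))
    (hx : ∀ {γ γ' : Γ.carrierᵒᵖ} (h : γ ⟶ γ'), Q.unop.obj.map (E.map h) (x γ) = x γ')
    (γ : Γ.carrierᵒᵖ) : secOf E (homOfSec E x hx) γ = x γ := by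
  dsimp [secOf, homOfSec]
  rw [colimit.ι_desc]
  exact coyonedaEquiv.apply_symm_apply _

lemma secOf_comp {Q' Q : Pro C} (p : Q' ⟶ Q) (f : Q ⟶ plimObj E) (γ : Γ.carrierᵒᵖ) :
    secOf E (p ≫ f) γ =
      (p.unop.hom : Q.unop.obj ⟶ Q'.unop.obj).app _ (secOf E f γ) := by
  dsimp [secOf]
  rw [← coyonedaEquiv_comp]
  congr 1

end HomFramework

section ConstHoms

variable {Q Q' : Pro C} {A B : C}

/-- The element of `F_Q(A)` corresponding to a morphism `Q ⟶ constPro A`. -/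
noncomputable def constSec (f : Q ⟶ (constPro C).obj A) : Q.unop.obj.obj A :=
  secOf ((Functor.const unitPoset.carrierᵒᵖ).obj A)
    (f : Q ⟶ plimObj ((Functor.const unitPoset.carrierᵒᵖ).obj A)) (op PUnit.unit)

/-- The morphism `Q ⟶ constPro A` corresponding to an element of `F_Q(A)`. -/
lemma constOf_aux (x : Q.unop.obj.obj A) :
    ∀ {γ γ' : unitPoset.carrierᵒᵖ} (h : γ ⟶ γ'),
      Q.unop.obj.map (((Functor.const unitPoset.carrierᵒᵖ).obj A).map h) x = x := by
  intro γ γ' h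
  simp

noncomputable def constOf (x : Q.unop.obj.obj A) : Q ⟶ (constPro C).obj A :=
  show Q ⟶ plimObj ((Functor.const unitPoset.carrierᵒᵖ).obj A) from
    homOfSec _ (fun _ => x) (constOf_aux x)

@[simp] lemma constSec_constOf (x : Q.unop.obj.obj A) : constSec (constOf x) = x :=
  secOf_homOfSec _ _ _ _

lemma constSec_injective {f f' : Q ⟶ (constPro C).obj A}
    (h : constSec f = constSec f') : f = f' := by
  apply secOf_hom_ext ((Functor.const unitPoset.carrierᵒᵖ).obj A)
    (f := (f : Q ⟶ plimObj _)) (f' := (f' : Q ⟶ plimObj _))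
  intro γ
  obtain ⟨⟨⟩⟩ := γ
  exact h

lemma constSec_comp (p : Q' ⟶ Q) (f : Q ⟶ (constPro C).obj A) :
    constSec (p ≫ f) = (p.unop.hom : Q.unop.obj ⟶ Q'.unop.obj).app A (constSec f) :=
  secOf_comp _ p (f : Q ⟶ plimObj _) (op PUnit.unit)

end ConstHoms

section Elements

variable {Δ : DirPoset.{v}} (G : Δ.carrierᵒᵖ ⥤ C) {A B : C}

lemma exists_rep (x : (colimit (corepDiagram C G)).obj A) :
    ∃ (δ : Δ.carrier) (h : G.obj (op δ) ⟶ A),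
      (colimit.ι (corepDiagram C G) δ).app A h = x := by
  obtain ⟨δ, y, hy⟩ := Types.jointly_surjective _
    (isColimitOfPreserves ((evaluation C (Type v)).obj A)
      (colimit.isColimit (corepDiagram C G))) x
  exact ⟨δ, y, hy⟩

lemma ι_app_mono {δ δ' : Δ.carrier} (l : δ ≤ δ') (h : G.obj (op δ) ⟶ A) :
    (colimit.ι (corepDiagram C G) δ').app A (G.map (homOfLE l).op ≫ h) =
      (colimit.ι (corepDiagram C G) δ).app A h := by
  have := colimit.w (corepDiagram C G) (homOfLE l)
  have := types_congr_hom (NatTrans.congr_app this A) h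
  exact this

lemma map_ι_app {δ : Δ.carrier} (h : G.obj (op δ) ⟶ A) (w : A ⟶ B) :
    (colimit (corepDiagram C G)).map w ((colimit.ι (corepDiagram C G) δ).app A h) =
      (colimit.ι (corepDiagram C G) δ).app B (h ≫ w) :=
  (NatTrans.naturality_apply (colimit.ι (corepDiagram C G) δ) w h).symm

lemma rep_eq {δ₁ δ₂ : Δ.carrier} {h₁ : G.obj (op δ₁) ⟶ A} {h₂ : G.obj (op δ₂) ⟶ A}
    (heq : (colimit.ι (corepDiagram C G) δ₁).app A h₁ =
      (colimit.ι (corepDiagram C G) δ₂).app A h₂) :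
    ∃ (δ₃ : Δ.carrier) (l₁ : δ₁ ≤ δ₃) (l₂ : δ₂ ≤ δ₃),
      G.map (homOfLE l₁).op ≫ h₁ = G.map (homOfLE l₂).op ≫ h₂ := by
  haveI : Nonempty Δ.carrier := Δ.nonempty
  haveI : IsDirected Δ.carrier (· ≤ ·) := Δ.directed
  have hiso := isColimitOfPreserves ((evaluation C (Type v)).obj A)
    (colimit.isColimit (corepDiagram C G))
  obtain ⟨δ₃, f, g, hfg⟩ := (Types.FilteredColimit.isColimit_eq_iff _ hiso).mp heq
  exact ⟨δ₃, leOfHom f, leOfHom g, hfg⟩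

end Elements

section PreservePi

variable [HasFiniteProducts C]

theorem colim_corep_pi_bijective (Δ : DirPoset.{v}) (G : Δ.carrierᵒᵖ ⥤ C)
    {J : Type} [Finite J] (Y : J → C) :
    Function.Bijective (fun (x : (colimit (corepDiagram C G)).obj (∏ᶜ Y)) (j : J) =>
      (colimit (corepDiagram C G)).map (Pi.π Y j) x) := by
  haveI : Nonempty Δ.carrier := Δ.nonempty
  haveI : IsDirected Δ.carrier (· ≤ ·) := Δ.directed
  constructor
  · intro x x' hxx'
    obtain ⟨δ₁, h₁, rfl⟩ := exists_rep G x
    obtain ⟨δ₂, h₂, rfl⟩ := exists_rep G x'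
    obtain ⟨δ₀, l₁, l₂⟩ := directed_of (· ≤ ·) δ₁ δ₂
    rw [← ι_app_mono G l₁ h₁, ← ι_app_mono G l₂ h₂] at hxx' ⊢
    set t₁ := G.map (homOfLE l₁).op ≫ h₁ with ht₁
    set t₂ := G.map (homOfLE l₂).op ≫ h₂ with ht₂
    have hstage : ∀ j : J, ∃ (δj : Δ.carrier) (lj : δ₀ ≤ δj),
        G.map (homOfLE lj).op ≫ t₁ ≫ Pi.π Y j = G.map (homOfLE lj).op ≫ t₂ ≫ Pi.π Y j := by
      intro j
      have := congrFun hxx' j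
      dsimp only at this
      rw [map_ι_app, map_ι_app] at this
      obtain ⟨δj, lj, lj', hfg⟩ := rep_eq G this
      exact ⟨δj, lj, hfg⟩
    choose δs ls hs using hstage
    obtain ⟨δp, hp⟩ := Finite.exists_le δs
    obtain ⟨δplus, l₀, lp⟩ := directed_of (· ≤ ·) δ₀ δp
    have key : ∀ j, G.map (homOfLE l₀).op ≫ t₁ ≫ Pi.π Y j =
        G.map (homOfLE l₀).op ≫ t₂ ≫ Pi.π Y j := by
      intro j
      have hdec : (homOfLE l₀ : δ₀ ⟶ δplus) = homOfLE (ls j) ≫ homOfLE ((hp j).trans lp) := rfl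
      rw [hdec, op_comp, G.map_comp]
      simp only [Category.assoc]
      rw [hs j]
    have heq2 : G.map (homOfLE l₀).op ≫ t₁ = G.map (homOfLE l₀).op ≫ t₂ :=
      Pi.hom_ext _ _ (fun j => by simpa [Category.assoc] using key j)
    calc (colimit.ι (corepDiagram C G) δ₀).app (∏ᶜ Y) t₁
        = (colimit.ι (corepDiagram C G) δplus).app (∏ᶜ Y) (G.map (homOfLE l₀).op ≫ t₁) :=
          (ι_app_mono G l₀ t₁).symm
      _ = (colimit.ι (corepDiagram C G) δplus).app (∏ᶜ Y) (G.map (homOfLE l₀).op ≫ t₂) := by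
          rw [heq2]
      _ = (colimit.ι (corepDiagram C G) δ₀).app (∏ᶜ Y) t₂ := ι_app_mono G l₀ t₂
  · intro y
    choose δs hs hrep using fun j => exists_rep G (y j)
    obtain ⟨δstar, hstar⟩ := Finite.exists_le δs
    refine ⟨(colimit.ι (corepDiagram C G) δstar).app (∏ᶜ Y)
      (Pi.lift fun j => G.map (homOfLE (hstar j)).op ≫ hs j), ?_⟩
    funext j
    dsimp only
    rw [map_ι_app]
    rw [Pi.lift_π, ι_app_mono G (hstar j) (hs j), hrep j]

theorem pro_pi_bijective (Q : Pro C) {J : Type} [Finite J] (Y : J → C) :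
    Function.Bijective (fun (x : Q.unop.obj.obj (∏ᶜ Y)) (j : J) =>
      Q.unop.obj.map (Pi.π Y j) x) := by
  obtain ⟨Δ, G, ⟨e⟩⟩ := Q.unop.property
  have hcolim := colim_corep_pi_bijective Δ G Y
  have key : (fun (x : Q.unop.obj.obj (∏ᶜ Y)) (j : J) => Q.unop.obj.map (Pi.π Y j) x)
      = (fun z (j : J) => e.inv.app (Y j) (z j)) ∘
        ((fun z (j : J) => (colimit (corepDiagram C G)).map (Pi.π Y j) z) ∘
          (e.hom.app (∏ᶜ Y))) := by
    funext x
    funext j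
    dsimp
    rw [← NatTrans.naturality_apply e.hom (Pi.π Y j) x]
    exact (Iso.hom_inv_id_app_apply e _ _).symm
  rw [key]
  exact (Equiv.piCongrRight fun j => (e.app (Y j)).toEquiv.symm).bijective.comp
    (hcolim.comp (e.app (∏ᶜ Y)).toEquiv.bijective)

end PreservePi

section ProductConstruction

lemma preorder_hom_eq {α : Type*} [Preorder α] {a c : α} (f g : a ⟶ c) : f = g :=
  Subsingleton.elim f g

variable [HasFiniteProducts C]
variable {ι : Type} [DecidableEq ι] (Γf : ι → DirPoset.{v})
  (b : ∀ i, (Γf i).carrier) (Dd : ∀ i, (Γf i).carrierᵒᵖ ⥤ C)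

/-- The index poset for the product of the pro-objects `plim (Dd i)`:
finitely supported families of indices. -/
def Lam : Type v :=
  {p : Finset ι × (∀ i, (Γf i).carrier) // ∀ i, i ∉ p.1 → p.2 i = b i}

instance : PartialOrder (Lam Γf b) where
  le p q := p.1.1 ⊆ q.1.1 ∧ ∀ i ∈ p.1.1, p.1.2 i ≤ q.1.2 i
  le_refl p := ⟨subset_rfl, fun i _ => le_rfl⟩
  le_trans p q r hpq hqr :=
    ⟨hpq.1.trans hqr.1, fun i hi => (hpq.2 i hi).trans (hqr.2 i (hpq.1 hi))⟩
  le_antisymm p q hpq hqp := by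
    have hS : p.1.1 = q.1.1 := Finset.Subset.antisymm hpq.1 hqp.1
    apply Subtype.ext
    apply Prod.ext hS
    funext i
    by_cases hi : i ∈ p.1.1
    · exact le_antisymm (hpq.2 i hi) (hqp.2 i (hS ▸ hi))
    · rw [p.2 i hi, q.2 i (by rw [← hS]; exact hi)]

lemma lam_le_def {p q : Lam Γf b} :
    p ≤ q ↔ p.1.1 ⊆ q.1.1 ∧ ∀ i ∈ p.1.1, p.1.2 i ≤ q.1.2 i := Iff.rfl

lemma lam_directed : IsDirected (Lam Γf b) (· ≤ ·) := by
  constructor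
  intro p q
  have hub : ∀ i, ∃ z : (Γf i).carrier, p.1.2 i ≤ z ∧ q.1.2 i ≤ z := by
    intro i
    haveI := (Γf i).directed
    exact directed_of (· ≤ ·) _ _
  choose ub hub1 hub2 using hub
  refine ⟨⟨⟨p.1.1 ∪ q.1.1, fun i => if i ∈ p.1.1 ∪ q.1.1 then ub i else b i⟩,
    fun i hi => if_neg hi⟩, ⟨Finset.subset_union_left, fun i hi => ?_⟩,
    ⟨Finset.subset_union_right, fun i hi => ?_⟩⟩
  · show p.1.2 i ≤ if i ∈ p.1.1 ∪ q.1.1 then ub i else b i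
    rw [if_pos (Finset.mem_union_left _ hi)]
    exact hub1 i
  · show q.1.2 i ≤ if i ∈ p.1.1 ∪ q.1.1 then ub i else b i
    rw [if_pos (Finset.mem_union_right _ hi)]
    exact hub2 i

/-- The index poset bundled as a directed poset. -/
@[reducible] def LamPoset : DirPoset.{v} where
  carrier := Lam Γf b
  nonempty := ⟨⟨(∅, b), fun _ _ => rfl⟩⟩
  directed := lam_directed Γf b

/-- The diagram of finite products defining the product pro-object. -/
@[reducible] noncomputable def Ediag : (Lam Γf b)ᵒᵖ ⥤ C where
  obj μ := ∏ᶜ fun i : ↥μ.unop.1.1 => (Dd i.1).obj (op (μ.unop.1.2 i.1))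
  map {μ ν} h := Pi.lift fun i =>
    Pi.π _ (⟨i.1, (leOfHom h.unop).1 i.2⟩ : ↥μ.unop.1.1) ≫
      (Dd i.1).map (homOfLE ((leOfHom h.unop).2 i.1 i.2)).op
  map_id μ := by
    apply Pi.hom_ext
    intro i
    rw [Pi.lift_π, Category.id_comp]
    rw [show (homOfLE ((leOfHom (𝟙 μ).unop).2 i.1 i.2)) = 𝟙 _ from rfl]
    simp
  map_comp {μ ν ρ} h h' := by
    apply Pi.hom_ext
    intro i
    rw [Pi.lift_π, Category.assoc, Pi.lift_π, ← Category.assoc, Pi.lift_π]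
    rw [Category.assoc, ← Functor.map_comp, ← op_comp]
    congr 1

@[reducible] noncomputable def prodObj : Pro C :=
  plimObj (Γ := LamPoset Γf b) (Ediag Γf b Dd)

/-- The one-point stage. -/
def single (i : ι) (γ : (Γf i).carrier) : Lam Γf b :=
  ⟨({i}, Function.update b i γ),
    fun j hj => Function.update_of_ne (by simpa using hj) _ _⟩

lemma lam_le_sub {p q : Lam Γf b} (h : p ≤ q) : p.1.1 ⊆ q.1.1 := h.1

lemma lam_le_val {p q : Lam Γf b} (h : p ≤ q) (i : ι) (hi : i ∈ p.1.1) :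
    p.1.2 i ≤ q.1.2 i := h.2 i hi

lemma mem_single_self (i : ι) (γ : (Γf i).carrier) : i ∈ (single Γf b i γ).1.1 :=
  Finset.mem_singleton_self i

lemma single_val_self (i : ι) (γ : (Γf i).carrier) : (single Γf b i γ).1.2 i = γ := by
  simp [single]

lemma single_val_mem {i j : ι} {γ : (Γf i).carrier} (hj : j ∈ (single Γf b i γ).1.1) :
    j = i := by simpa [single] using hj

/-- The canonical morphism from the one-point stage to the `i`-th factor. -/
noncomputable def ρHom (i : ι) (γ : (Γf i).carrier) :
    (Ediag Γf b Dd).obj (op (single Γf b i γ)) ⟶ (Dd i).obj (op γ) :=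
  Pi.π _ (⟨i, Finset.mem_singleton_self i⟩ : ↥(single Γf b i γ).1.1) ≫
    eqToHom (by rw [single_val_self])

lemma single_le (i : ι) (γ : (Γf i).carrier) {μ : Lam Γf b} (hi : i ∈ μ.1.1)
    (hγ : γ ≤ μ.1.2 i) : single Γf b i γ ≤ μ := by
  refine ⟨?_, fun j hj => ?_⟩
  · show ({i} : Finset ι) ⊆ μ.1.1
    exact Finset.singleton_subset_iff.mpr hi
  · have hj' := single_val_mem Γf b hj
    subst hj'
    rw [single_val_self]
    exact hγ

lemma single_le_single (i : ι) {γ γ' : (Γf i).carrier} (h : γ ≤ γ') :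
    single Γf b i γ ≤ single Γf b i γ' :=
  single_le Γf b i γ (Finset.mem_singleton_self i)
    (by rw [single_val_self]; exact h)

lemma tail_collapse {i : ι} {a u c : (Γf i).carrier} (hu : u = c) (h1 : u ≤ a) (h2 : c ≤ a) :
    (Dd i).map (homOfLE h1).op ≫ eqToHom (congrArg (fun z => (Dd i).obj (op z)) hu) =
      (Dd i).map (homOfLE h2).op := by
  subst hu
  rw [eqToHom_refl, Category.comp_id]

lemma tail_collapse2 {i : ι} {u u' g g' : (Γf i).carrier} (hu : u = g) (hu' : u' = g')
    (h : g ⟶ g') (hle2 : u ≤ u') :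
    eqToHom (congrArg (fun z => (Dd i).obj (op z)) hu') ≫ (Dd i).map h.op =
      (Dd i).map (homOfLE hle2).op ≫ eqToHom (congrArg (fun z => (Dd i).obj (op z)) hu) := by
  subst hu
  subst hu'
  rw [eqToHom_refl, eqToHom_refl, Category.comp_id, Category.id_comp]
  exact congrArg (Dd i).map (op_hom_eq _ _)


/-- The collapse identity: restriction to a one-point stage followed by `ρHom`
is a product projection. -/
lemma map_comp_ρHom {μ : Lam Γf b} {i : ι} (hi : i ∈ μ.1.1) {γ : (Γf i).carrier}
    (hγ : γ ≤ μ.1.2 i) (hle : single Γf b i γ ≤ μ) :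
    (Ediag Γf b Dd).map (homOfLE hle).op ≫ ρHom Γf b Dd i γ =
      Pi.π _ (⟨i, hi⟩ : ↥μ.1.1) ≫ (Dd i).map (homOfLE hγ).op := by
  dsimp only [Ediag, ρHom]
  rw [← Category.assoc, Pi.lift_π]
  simp only [Category.assoc]
  show Pi.π (fun k : ↥μ.1.1 => (Dd k.1).obj (op (μ.1.2 k.1))) ⟨i, hi⟩ ≫
      (Dd i).map (homOfLE (lam_le_val Γf b hle i (mem_single_self Γf b i γ))).op ≫
        eqToHom (congrArg (fun z => (Dd i).obj (op z)) (single_val_self Γf b i γ)) =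
    Pi.π (fun k : ↥μ.1.1 => (Dd k.1).obj (op (μ.1.2 k.1))) ⟨i, hi⟩ ≫
      (Dd i).map (homOfLE hγ).op
  rw [tail_collapse Γf Dd (single_val_self Γf b i γ) _ hγ]

/-- The projection `prodObj ⟶ plim (Dd i)`. -/
noncomputable def pr (i : ι) : prodObj Γf b Dd ⟶ plimObj (Γ := Γf i) (Dd i) := by
  refine ofNat (Dd i) (colimit.desc (corepDiagram C (Dd i))
    { pt := colimit (corepDiagram C (Ediag Γf b Dd))
      ι :=
        { app := fun γ => coyoneda.map (ρHom Γf b Dd i γ).op ≫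
            colimit.ι (corepDiagram C (Ediag Γf b Dd)) (single Γf b i γ)
          naturality := ?_ } })
  intro γ γ' h
  simp only [Functor.const_obj_map, Category.comp_id]
  have hle : single Γf b i γ ≤ single Γf b i γ' := single_le_single Γf b i (leOfHom h)
  rw [show colimit.ι (corepDiagram C (Ediag Γf b Dd)) (single Γf b i γ) =
      (corepDiagram C (Ediag Γf b Dd)).map (homOfLE hle) ≫
        colimit.ι (corepDiagram C (Ediag Γf b Dd)) (single Γf b i γ') from
      (colimit.w _ _).symm]
  rw [← Category.assoc, ← Category.assoc]
  congr 1
  dsimp only [corepDiagram, Functor.comp_map, Functor.rightOp_map]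
  rw [← coyoneda.map_comp, ← coyoneda.map_comp, ← op_comp, ← op_comp]
  congr 1
  -- now a morphism equality in C (under `op`)
  dsimp only [ρHom, Ediag]
  rw [← Category.assoc, Pi.lift_π]
  simp only [Category.assoc]
  congr 1
  show Pi.π (fun k : ↥(single Γf b i γ').1.1 =>
        (Dd k.1).obj (op ((single Γf b i γ').1.2 k.1))) ⟨i, mem_single_self Γf b i γ'⟩ ≫
      eqToHom (congrArg (fun z => (Dd i).obj (op z)) (single_val_self Γf b i γ')) ≫
        (Dd i).map h.op =
    Pi.π (fun k : ↥(single Γf b i γ').1.1 =>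
        (Dd k.1).obj (op ((single Γf b i γ').1.2 k.1))) ⟨i, mem_single_self Γf b i γ'⟩ ≫
      (Dd i).map (homOfLE (lam_le_val Γf b hle i (mem_single_self Γf b i γ))).op ≫
        eqToHom (congrArg (fun z => (Dd i).obj (op z)) (single_val_self Γf b i γ))
  rw [tail_collapse2 Γf Dd (single_val_self Γf b i γ) (single_val_self Γf b i γ') h _]

lemma ι_pr_unop (i : ι) (γ : (Γf i).carrier) :
    colimit.ι (corepDiagram C (Dd i)) γ ≫
        ((pr Γf b Dd i).unop.hom : colimit (corepDiagram C (Dd i)) ⟶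
          colimit (corepDiagram C (Ediag Γf b Dd))) =
      coyoneda.map (ρHom Γf b Dd i γ).op ≫
        colimit.ι (corepDiagram C (Ediag Γf b Dd)) (single Γf b i γ) := by
  dsimp only [pr, ofNat_unop]
  rw [colimit.ι_desc]

lemma secOf_cast {Γ : DirPoset.{v}} (E : Γ.carrierᵒᵖ ⥤ C) {Q : Pro C} (f : Q ⟶ plimObj E)
    {a a' : Γ.carrier} (h : a = a') :
    Q.unop.obj.map (eqToHom (congrArg (fun z => E.obj (op z)) h)) (secOf E f (op a)) =
      secOf E f (op a') := by
  subst h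
  simp

lemma secOf_comp_pr_single {Q : Pro C} (p : Q ⟶ prodObj Γf b Dd) (i : ι)
    (γ : (Γf i).carrier) :
    secOf (Dd i) (p ≫ pr Γf b Dd i) (op γ) =
      Q.unop.obj.map (ρHom Γf b Dd i γ)
        (secOf (Γ := LamPoset Γf b) (Ediag Γf b Dd) p (op (single Γf b i γ))) := by
  have h1 : secOf (Dd i) (pr Γf b Dd i) (op γ) =
      coyonedaEquiv (coyoneda.map (ρHom Γf b Dd i γ).op ≫
        colimit.ι (corepDiagram C (Ediag Γf b Dd)) (single Γf b i γ)) := by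
    dsimp only [secOf]
    rw [ι_pr_unop]
  calc secOf (Dd i) (p ≫ pr Γf b Dd i) (op γ)
      = (p.unop.hom : (prodObj Γf b Dd).unop.obj ⟶ Q.unop.obj).app _
          (secOf (Dd i) (pr Γf b Dd i) (op γ)) := secOf_comp _ _ _ _
    _ = (p.unop.hom : (prodObj Γf b Dd).unop.obj ⟶ Q.unop.obj).app _
          (coyonedaEquiv (coyoneda.map (ρHom Γf b Dd i γ).op ≫
            colimit.ι (corepDiagram C (Ediag Γf b Dd)) (single Γf b i γ))) := by
        rw [h1]
    _ = coyonedaEquiv ((coyoneda.map (ρHom Γf b Dd i γ).op ≫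
            colimit.ι (corepDiagram C (Ediag Γf b Dd)) (single Γf b i γ)) ≫
          (p.unop.hom : colimit (corepDiagram C (Ediag Γf b Dd)) ⟶ Q.unop.obj)) :=
        (coyonedaEquiv_comp _ _).symm
    _ = coyonedaEquiv (coyoneda.map (ρHom Γf b Dd i γ).op ≫
          (colimit.ι (corepDiagram C (Ediag Γf b Dd)) (single Γf b i γ) ≫
            (p.unop.hom : colimit (corepDiagram C (Ediag Γf b Dd)) ⟶ Q.unop.obj))) := by
        rw [Category.assoc]
    _ = Q.unop.obj.map (ρHom Γf b Dd i γ)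
          (coyonedaEquiv (colimit.ι (corepDiagram C (Ediag Γf b Dd)) (single Γf b i γ) ≫
            (p.unop.hom : colimit (corepDiagram C (Ediag Γf b Dd)) ⟶ Q.unop.obj))) :=
        (coyonedaEquiv_naturality _ _).symm
    _ = Q.unop.obj.map (ρHom Γf b Dd i γ)
          (secOf (Γ := LamPoset Γf b) (Ediag Γf b Dd) p (op (single Γf b i γ))) := rfl

lemma secOf_comp_pr_mem {Q : Pro C} (p : Q ⟶ prodObj Γf b Dd) (μ : Lam Γf b) {i : ι}
    (hi : i ∈ μ.1.1) :
    secOf (Dd i) (p ≫ pr Γf b Dd i) (op (μ.1.2 i)) =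
      Q.unop.obj.map (Pi.π (fun k : ↥μ.1.1 => (Dd k.1).obj (op (μ.1.2 k.1))) ⟨i, hi⟩)
        (secOf (Γ := LamPoset Γf b) (Ediag Γf b Dd) p (op μ)) := by
  have hle : single Γf b i (μ.1.2 i) ≤ μ := single_le Γf b i (μ.1.2 i) hi le_rfl
  rw [secOf_comp_pr_single,
    ← secOf_compat (Γ := LamPoset Γf b) (Ediag Γf b Dd) p
      ((homOfLE hle).op : op μ ⟶ op (single Γf b i (μ.1.2 i))),
    ← FunctorToTypes.map_comp_apply, map_comp_ρHom Γf b Dd hi le_rfl hle]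
  rw [show (homOfLE (le_refl (μ.1.2 i))).op = 𝟙 (op (μ.1.2 i)) from rfl]
  rw [CategoryTheory.Functor.map_id, Category.comp_id]

/-- The equivalence given by the fact that pro-functors preserve finite products. -/
noncomputable def famEquiv (Q : Pro C) (μ : Lam Γf b) :
    Q.unop.obj.obj ((Ediag Γf b Dd).obj (op μ)) ≃
      ∀ k : ↥μ.1.1, Q.unop.obj.obj ((Dd k.1).obj (op (μ.1.2 k.1))) :=
  Equiv.ofBijective _
    (pro_pi_bijective Q (fun k : ↥μ.1.1 => (Dd k.1).obj (op (μ.1.2 k.1))))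

lemma famEquiv_apply (Q : Pro C) (μ : Lam Γf b)
    (x : Q.unop.obj.obj ((Ediag Γf b Dd).obj (op μ))) (k : ↥μ.1.1) :
    famEquiv Γf b Dd Q μ x k =
      Q.unop.obj.map (Pi.π (fun k : ↥μ.1.1 => (Dd k.1).obj (op (μ.1.2 k.1))) k) x := rfl

/-- The compatible family of sections defining the lift of a fan. -/
noncomputable def liftSec (s : Fan fun i => plimObj (Γ := Γf i) (Dd i))
    (μ : (Lam Γf b)ᵒᵖ) : s.pt.unop.obj.obj ((Ediag Γf b Dd).obj μ) :=
  (famEquiv Γf b Dd s.pt μ.unop).symm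
    (fun k => secOf (Dd k.1) (s.proj k.1) (op (μ.unop.1.2 k.1)))

lemma map_liftSec (s : Fan fun i => plimObj (Γ := Γf i) (Dd i)) (μ : Lam Γf b)
    (k : ↥μ.1.1) :
    s.pt.unop.obj.map (Pi.π (fun k : ↥μ.1.1 => (Dd k.1).obj (op (μ.1.2 k.1))) k)
        (liftSec Γf b Dd s (op μ)) =
      secOf (Dd k.1) (s.proj k.1) (op (μ.1.2 k.1)) :=
  congrFun ((famEquiv Γf b Dd s.pt μ).apply_symm_apply _) k

lemma liftSec_compat (s : Fan fun i => plimObj (Γ := Γf i) (Dd i))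
    {μ ν : (Lam Γf b)ᵒᵖ} (h : μ ⟶ ν) :
    s.pt.unop.obj.map ((Ediag Γf b Dd).map h) (liftSec Γf b Dd s μ) =
      liftSec Γf b Dd s ν := by
  apply (famEquiv Γf b Dd s.pt ν.unop).injective
  funext k
  rw [famEquiv_apply, ← FunctorToTypes.map_comp_apply]
  show s.pt.unop.obj.map ((Ediag Γf b Dd).map h ≫ Pi.π _ k) _ = _
  rw [show (Ediag Γf b Dd).map h ≫ Pi.π _ k =
      Pi.π (fun j : ↥μ.unop.1.1 => (Dd j.1).obj (op (μ.unop.1.2 j.1)))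
          ⟨k.1, (leOfHom h.unop).1 k.2⟩ ≫
        (Dd k.1).map (homOfLE ((leOfHom h.unop).2 k.1 k.2)).op from Pi.lift_π _ _]
  rw [FunctorToTypes.map_comp_apply, map_liftSec]
  rw [show liftSec Γf b Dd s ν = (famEquiv Γf b Dd s.pt ν.unop).symm
    (fun k => secOf (Dd k.1) (s.proj k.1) (op (ν.unop.1.2 k.1))) from rfl]
  rw [show (famEquiv Γf b Dd s.pt ν.unop)
      ((famEquiv Γf b Dd s.pt ν.unop).symm
        (fun k => secOf (Dd k.1) (s.proj k.1) (op (ν.unop.1.2 k.1)))) k =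
      secOf (Dd k.1) (s.proj k.1) (op (ν.unop.1.2 k.1)) from
    congrFun ((famEquiv Γf b Dd s.pt ν.unop).apply_symm_apply _) k]
  exact secOf_compat (Dd k.1) (s.proj k.1)
    ((homOfLE ((leOfHom h.unop).2 k.1 k.2)).op :
      op (μ.unop.1.2 k.1) ⟶ op (ν.unop.1.2 k.1))

/-- The lift of a fan to the product pro-object. -/
noncomputable def prodLift (s : Fan fun i => plimObj (Γ := Γf i) (Dd i)) :
    s.pt ⟶ prodObj Γf b Dd :=
  homOfSec (Γ := LamPoset Γf b) (Ediag Γf b Dd) (liftSec Γf b Dd s)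
    (liftSec_compat Γf b Dd s)

lemma prodLift_fac (s : Fan fun i => plimObj (Γ := Γf i) (Dd i)) (i : ι) :
    prodLift Γf b Dd s ≫ pr Γf b Dd i = s.proj i := by
  apply secOf_hom_ext (Dd i)
  intro γop
  obtain ⟨γ⟩ := γop
  rw [secOf_comp_pr_single]
  rw [show secOf (Γ := LamPoset Γf b) (Ediag Γf b Dd) (prodLift Γf b Dd s)
      (op (single Γf b i γ)) = liftSec Γf b Dd s (op (single Γf b i γ)) from
    secOf_homOfSec _ _ _ _]
  dsimp only [ρHom]
  rw [FunctorToTypes.map_comp_apply, map_liftSec]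
  exact secOf_cast (Dd i) (s.proj i) (single_val_self Γf b i γ)

lemma prodLift_uniq (s : Fan fun i => plimObj (Γ := Γf i) (Dd i))
    (m : s.pt ⟶ prodObj Γf b Dd) (hm : ∀ i, m ≫ pr Γf b Dd i = s.proj i) :
    m = prodLift Γf b Dd s := by
  apply secOf_hom_ext (Γ := LamPoset Γf b) (Ediag Γf b Dd)
  intro μop
  obtain ⟨μ⟩ := μop
  apply (famEquiv Γf b Dd s.pt μ).injective
  funext k
  rw [famEquiv_apply, famEquiv_apply]
  rw [← secOf_comp_pr_mem Γf b Dd m μ k.2, ← secOf_comp_pr_mem Γf b Dd (prodLift Γf b Dd s) μ k.2]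
  rw [hm k.1, prodLift_fac Γf b Dd s k.1]

/-- The product fan on the pro-objects `plim (Dd i)`. -/
noncomputable def prodFan : Fan (fun i => plimObj (Γ := Γf i) (Dd i)) :=
  Fan.mk (prodObj Γf b Dd) (pr Γf b Dd)

/-- The product fan is a limit fan: `Pro C` has products of `plim`s. -/
noncomputable def prodFanIsLimit : IsLimit (prodFan Γf b Dd) :=
  mkFanLimit _ (fun s => prodLift Γf b Dd s)
    (fun s i => prodLift_fac Γf b Dd s i)
    (fun s m hm => prodLift_uniq Γf b Dd s m hm)

end ProductConstruction

section Helpers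

lemma unop_app_ι {Γ : DirPoset.{v}} {E : Γ.carrierᵒᵖ ⥤ C} {Q : Pro C} (ψ : Q ⟶ plimObj E)
    (μ : Γ.carrier) {A : C} (w : E.obj (op μ) ⟶ A) :
    (ψ.unop.hom : colimit (corepDiagram C E) ⟶ Q.unop.obj).app A
        ((colimit.ι (corepDiagram C E) μ).app A w) =
      Q.unop.obj.map w (secOf E ψ (op μ)) := by
  have := map_coyonedaEquiv (colimit.ι (corepDiagram C E) μ ≫
    (ψ.unop.hom : colimit (corepDiagram C E) ⟶ Q.unop.obj)) w
  rw [show secOf E ψ (op μ) = coyonedaEquiv (colimit.ι (corepDiagram C E) μ ≫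
    (ψ.unop.hom : colimit (corepDiagram C E) ⟶ Q.unop.obj)) from rfl]
  rw [this]
  exact rfl

end Helpers

section ProductConstruction2

variable [HasFiniteProducts C]
variable {ι : Type} [DecidableEq ι] (Γf : ι → DirPoset.{v})
  (b : ∀ i, (Γf i).carrier) (Dd : ∀ i, (Γf i).carrierᵒᵖ ⥤ C)

lemma secOf_pr (μ : Lam Γf b) {i : ι} (hi : i ∈ μ.1.1) :
    secOf (Dd i) (pr Γf b Dd i) (op (μ.1.2 i)) =
      (colimit.ι (corepDiagram C (Ediag Γf b Dd)) μ).app _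
        (Pi.π (fun k : ↥μ.1.1 => (Dd k.1).obj (op (μ.1.2 k.1))) ⟨i, hi⟩) := by
  have h0 := secOf_comp_pr_mem Γf b Dd (𝟙 (prodObj Γf b Dd)) μ hi
  rw [Category.id_comp] at h0
  rw [h0]
  have h1 : secOf (Γ := LamPoset Γf b) (Ediag Γf b Dd) (𝟙 (prodObj Γf b Dd)) (op μ) =
      (colimit.ι (corepDiagram C (Ediag Γf b Dd)) μ).app _
        (𝟙 ((Ediag Γf b Dd).obj (op μ))) := by
    rw [show secOf (Γ := LamPoset Γf b) (Ediag Γf b Dd) (𝟙 (prodObj Γf b Dd)) (op μ) =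
      coyonedaEquiv (colimit.ι (corepDiagram C (Ediag Γf b Dd)) μ ≫
        𝟙 (colimit (corepDiagram C (Ediag Γf b Dd)))) from rfl]
    rw [Category.comp_id]
    exact coyonedaEquiv_apply _
  rw [h1]
  have h2 := map_ι_app (Δ := LamPoset Γf b) (Ediag Γf b Dd)
    (𝟙 ((Ediag Γf b Dd).obj (op μ)))
    (Pi.π (fun k : ↥μ.1.1 => (Dd k.1).obj (op (μ.1.2 k.1))) ⟨i, hi⟩)
  exact h2.trans (congrArg _ (Category.id_comp _))

end ProductConstruction2

section FanIso

variable {𝒞 : Type u'} [Category.{v} 𝒞] {ιx : Type} {f g : ιx → 𝒞}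

/-- Transport a limit fan along componentwise isomorphisms. -/
noncomputable def fanIsoIsLimit (t : Fan f) (ht : IsLimit t) (e : ∀ i, g i ≅ f i) :
    IsLimit (Fan.mk t.pt fun i => t.π.app ⟨i⟩ ≫ (e i).inv) := by
  refine mkFanLimit _
    (fun s => ht.lift (Fan.mk s.pt fun i => s.π.app ⟨i⟩ ≫ (e i).hom)) ?_ ?_
  · intro s i
    show ht.lift (Fan.mk s.pt fun i => s.π.app ⟨i⟩ ≫ (e i).hom) ≫
      (t.π.app ⟨i⟩ ≫ (e i).inv) = s.π.app ⟨i⟩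
    rw [← Category.assoc, ht.fac (Fan.mk s.pt fun i => s.π.app ⟨i⟩ ≫ (e i).hom) ⟨i⟩]
    show (s.π.app ⟨i⟩ ≫ (e i).hom) ≫ (e i).inv = s.π.app ⟨i⟩
    simp
  · intro s m hm
    apply ht.hom_ext
    rintro ⟨i⟩
    rw [ht.fac (Fan.mk s.pt fun i => s.π.app ⟨i⟩ ≫ (e i).hom) ⟨i⟩]
    have h1' : m ≫ (t.π.app ⟨i⟩ ≫ (e i).inv) = s.π.app ⟨i⟩ := hm i
    show m ≫ t.π.app ⟨i⟩ = s.π.app ⟨i⟩ ≫ (e i).hom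
    rw [← h1']
    simp

end FanIso

end Auxiliary

/-- Let `C` be a category with finite products. For any countable family
`D : ℕ → Pro_ω C ⊆ Pro C`, any object `X` of `C`, any product `∏ₙ Dₙ` in `Pro C` (given by
a limit fan `c`) and any morphism `f : ∏ₙ Dₙ ⟶ X` in `Pro C`, the morphism `f` factors
through a finite subproduct: there are `m : ℕ`, a product `∏_{n ≤ m} Dₙ` (a limit fan `c'`)
and a morphism `g` such that `f` is the composite of the canonical subproduct projection
with `g`. -/
theorem statement_12 (C : Type u) [Category.{v} C] [HasFiniteProducts C]
    (D : ℕ → Pro C) (hD : ∀ n, InProOmega (D n)) (X : C)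
    (c : Fan D) (hc : IsLimit c) (f : c.pt ⟶ (constPro C).obj X) :
    ∃ (m : ℕ) (c' : Fan fun k : Fin (m + 1) => D k) (hc' : IsLimit c')
      (g : c'.pt ⟶ (constPro C).obj X),
      f = hc'.lift (Fan.mk c.pt fun k : Fin (m + 1) => c.proj k) ≫ g := by
  classical
  choose Γs hcnt Ds hIso using hD
  have eIso : ∀ n, D n ≅ plimObj (Ds n) := fun n => (hIso n).some
  let b : ∀ n : ℕ, (Γs n).carrier := fun n => Classical.choice (Γs n).nonempty
  -- the big product fan over `D`
  let cB : Fan D := Fan.mk (prodObj Γs b Ds)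
    (fun n => (prodFan Γs b Ds).π.app ⟨n⟩ ≫ (eIso n).inv)
  have hcB : IsLimit cB := fanIsoIsLimit (prodFan Γs b Ds) (prodFanIsLimit Γs b Ds) eIso
  let e : c.pt ≅ cB.pt := hc.conePointUniqueUpToIso hcB
  -- represent the morphism at a finite stage
  obtain ⟨lam, h, hrep⟩ := exists_rep (Δ := LamPoset Γs b) (Ediag Γs b Ds)
    (constSec (e.inv ≫ f) : (colimit (corepDiagram C (Ediag Γs b Ds))).obj X)
  let m : ℕ := lam.1.1.sup id
  have hlt : ∀ j ∈ lam.1.1, j < m + 1 := fun j hj =>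
    Nat.lt_succ_of_le (Finset.le_sup (f := id) hj)
  -- finite product data
  let Γs' : Fin (m + 1) → DirPoset.{v} := fun k => Γs k
  let b' : ∀ k, (Γs' k).carrier := fun k => b k
  let Ds' : ∀ k, (Γs' k).carrierᵒᵖ ⥤ C := fun k => Ds k
  let c' : Fan (fun k : Fin (m + 1) => D k) := Fan.mk (prodObj Γs' b' Ds')
    (fun k => (prodFan Γs' b' Ds').π.app ⟨k⟩ ≫ (eIso k).inv)
  have hc' : IsLimit c' :=
    fanIsoIsLimit (prodFan Γs' b' Ds') (prodFanIsLimit Γs' b' Ds') (fun k => eIso k)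
  -- the finite stage in the finite product
  let lam' : Lam Γs' b' := ⟨(lam.1.1.attachFin hlt, fun k => lam.1.2 k), by
    intro k hk
    have hk' : (k : ℕ) ∉ lam.1.1 := by
      intro hmem
      exact hk ((Finset.mem_attachFin hlt).mpr hmem)
    exact lam.2 k hk'⟩
  -- the reindexing isomorphisms
  let r : (Ediag Γs b Ds).obj (op lam) ⟶ (Ediag Γs' b' Ds').obj (op lam') :=
    Pi.lift fun k : ↥lam'.1.1 =>
      Pi.π (fun j : ↥lam.1.1 => (Ds j.1).obj (op (lam.1.2 j.1)))
        ⟨(k.1 : ℕ), (Finset.mem_attachFin hlt).mp k.2⟩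
  let r' : (Ediag Γs' b' Ds').obj (op lam') ⟶ (Ediag Γs b Ds).obj (op lam) :=
    Pi.lift fun j : ↥lam.1.1 =>
      Pi.π (fun k : ↥lam'.1.1 => (Ds' k.1).obj (op (lam'.1.2 k.1)))
        ⟨⟨j.1, hlt j.1 j.2⟩, (Finset.mem_attachFin hlt).mpr j.2⟩
  have hrr' : r ≫ r' = 𝟙 _ := by
    apply Pi.hom_ext
    intro j
    rw [Category.assoc, Pi.lift_π, Pi.lift_π, Category.id_comp]
  let g : c'.pt ⟶ (constPro C).obj X :=
    constOf ((colimit.ι (corepDiagram C (Ediag Γs' b' Ds')) lam').app X (r' ≫ h))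
  refine ⟨m, c', hc', g, ?_⟩
  set l := hc'.lift (Fan.mk c.pt fun k : Fin (m + 1) => c.proj k) with hl
  let ψ : cB.pt ⟶ c'.pt := e.inv ≫ l
  have hψ : ∀ k : Fin (m + 1), ψ ≫ pr Γs' b' Ds' k = pr Γs b Ds (k : ℕ) := by
    intro k
    have h1 : l ≫ c'.π.app ⟨k⟩ = c.π.app ⟨(k : ℕ)⟩ :=
      hc'.fac (Fan.mk c.pt fun k : Fin (m + 1) => c.proj k) ⟨k⟩
    have h2 : e.hom ≫ cB.π.app ⟨(k : ℕ)⟩ = c.π.app ⟨(k : ℕ)⟩ :=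
      IsLimit.conePointUniqueUpToIso_hom_comp hc hcB ⟨(k : ℕ)⟩
    have h3 : e.inv ≫ c.π.app ⟨(k : ℕ)⟩ = cB.π.app ⟨(k : ℕ)⟩ := by
      rw [← h2]
      simp [e]
    have h4 : pr Γs' b' Ds' k = c'.π.app ⟨k⟩ ≫ (eIso (k : ℕ)).hom := by
      show pr Γs' b' Ds' k =
        ((prodFan Γs' b' Ds').π.app ⟨k⟩ ≫ (eIso (k : ℕ)).inv) ≫ (eIso (k : ℕ)).hom
      rw [Category.assoc, Iso.inv_hom_id, Category.comp_id]
      rfl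
    have h5 : pr Γs b Ds (k : ℕ) = cB.π.app ⟨(k : ℕ)⟩ ≫ (eIso (k : ℕ)).hom := by
      show pr Γs b Ds (k : ℕ) =
        ((prodFan Γs b Ds).π.app ⟨(k : ℕ)⟩ ≫ (eIso (k : ℕ)).inv) ≫ (eIso (k : ℕ)).hom
      rw [Category.assoc, Iso.inv_hom_id, Category.comp_id]
      rfl
    show (e.inv ≫ l) ≫ pr Γs' b' Ds' k = pr Γs b Ds (k : ℕ)
    rw [h4, h5, ← h3, Category.assoc, ← Category.assoc l, h1]
    rw [Category.assoc]
  have hKey : secOf (Γ := LamPoset Γs' b') (Ediag Γs' b' Ds') ψ (op lam') =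
      (colimit.ι (corepDiagram C (Ediag Γs b Ds)) lam).app
        ((Ediag Γs' b' Ds').obj (op lam')) r := by
    apply (famEquiv Γs' b' Ds' cB.pt lam').injective
    funext k
    rw [famEquiv_apply]
    rw [← secOf_comp_pr_mem Γs' b' Ds' ψ lam' k.2]
    rw [hψ k.1]
    rw [secOf_pr Γs b Ds lam (i := (k.1 : ℕ)) ((Finset.mem_attachFin hlt).mp k.2)]
    have h6 := map_ι_app (Δ := LamPoset Γs b) (Ediag Γs b Ds) r
      (Pi.π (fun k : ↥lam'.1.1 => (Ds' k.1).obj (op (lam'.1.2 k.1))) k)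
    have hcomp : r ≫ Pi.π (fun k : ↥lam'.1.1 => (Ds' k.1).obj (op (lam'.1.2 k.1))) k =
        Pi.π (fun j : ↥lam.1.1 => (Ds j.1).obj (op (lam.1.2 j.1)))
          ⟨(k.1 : ℕ), (Finset.mem_attachFin hlt).mp k.2⟩ := Pi.lift_π _ _
    exact (h6.trans (congrArg _ hcomp)).symm
  have hfinal : e.inv ≫ f = ψ ≫ g := by
    apply constSec_injective
    rw [constSec_comp ψ g]
    rw [show constSec g = (colimit.ι (corepDiagram C (Ediag Γs' b' Ds')) lam').app X
      (r' ≫ h) from constSec_constOf _]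
    rw [← hrep]
    have h7 := unop_app_ι (Γ := LamPoset Γs' b') (E := Ediag Γs' b' Ds') ψ lam' (r' ≫ h)
    rw [h7, hKey]
    have h8 := map_ι_app (Δ := LamPoset Γs b) (Ediag Γs b Ds) r (r' ≫ h)
    have h9 : r ≫ r' ≫ h = h := by rw [← Category.assoc, hrr', Category.id_comp]
    exact (h8.trans (congrArg _ h9)).symm
  have hf : f = e.hom ≫ e.inv ≫ f := by simp
  rw [hf, hfinal]
  show e.hom ≫ (e.inv ≫ l) ≫ g = l ≫ g
  rw [← Category.assoc, ← Category.assoc, Iso.hom_inv_id, Category.id_comp]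


end ProPaper
end

section
/- Let B be an additive category with countable products and cokernels, and let B• be a bounded above cochain complex in B. For n ∈ ℤ let τ_{≥n}B• denote the canonical truncation: the complex with coker(B^{n−1} → B^n) in degree n, B^i in degrees i > n, and 0 in degrees below n. Consider the morphism of complexes B• → ∏_{n∈ℕ} τ_{≥−n}B• whose components are the natural projections B• → τ_{≥−n}B•, and the endomorphism (id − shift) of ∏_{n∈ℕ} τ_{≥−n}B•, where shift has components the natural transition maps τ_{≥−(n+1)}B• → τ_{≥−n}B•. Then the short sequence of complexes 0 → B• → ∏_{n∈ℕ} τ_{≥−n}B• → (id − shift) → ∏_{n∈ℕ} τ_{≥−n}B• → 0 is degreewise split exact; consequently, in the homotopy category Hot(B), the complex B• is a homotopy limit of the bounded complexes τ_{≥−n}B•. -/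
open CategoryTheory CategoryTheory.Limits CategoryTheory.Pretriangulated

universe v u

namespace ProPaper

section Aux

variable {B : Type u} [Category.{v} B] [Preadditive B] [HasZeroObject B]
    [HasBinaryBiproducts B] [HasCountableProducts B]
    (Bc : CochainComplex B ℤ)
    (T : ℕ → CochainComplex B ℤ) (p : ∀ n, Bc ⟶ T n)
    (hT0 : ∀ (n : ℕ) (i : ℤ), i < -(n : ℤ) → IsZero ((T n).X i))
    (hTiso : ∀ (n : ℕ) (i : ℤ), -(n : ℤ) < i → IsIso ((p n).f i))
    (t : ∀ n : ℕ, T (n + 1) ⟶ T n) (ht : ∀ n : ℕ, p (n + 1) ≫ t n = p n)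

include ht in
lemma aux_h0 : Pi.lift p ≫ (𝟙 (∏ᶜ T) - Pi.lift fun n => Pi.π T (n + 1) ≫ t n) = 0 := by
  apply limit.hom_ext
  rintro ⟨n⟩
  have : Pi.lift p ≫ (𝟙 (∏ᶜ T) - Pi.lift fun n => Pi.π T (n + 1) ≫ t n) ≫ Pi.π T n = 0 := by
    simp [Preadditive.comp_sub, Preadditive.sub_comp, ht n]

  simpa using this

include hT0 hTiso ht in
lemma aux_splitting
    (h0 : Pi.lift p ≫ (𝟙 (∏ᶜ T) - Pi.lift fun n => Pi.π T (n + 1) ≫ t n) = 0) (i : ℤ) :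
    Nonempty ((((ShortComplex.mk (Pi.lift p) (𝟙 (∏ᶜ T) - Pi.lift fun n => Pi.π T (n + 1) ≫ t n) h0)).map
      (HomologicalComplex.eval B (ComplexShape.up ℤ) i)).Splitting) := by
  obtain ⟨N, hN1, hN2⟩ : ∃ N : ℕ, (∀ n, N ≤ n → -(n : ℤ) < i) ∧
      (∀ n, n + 1 < N → i < -(n : ℤ)) := by
    refine ⟨(1 - i).toNat, fun n hn => ?_, fun n hn => ?_⟩
    · have h1 : (1 - i) ≤ ((1 - i).toNat : ℤ) := Int.self_le_toNat _
      have h2 : (((1 - i).toNat : ℕ) : ℤ) ≤ (n : ℤ) := by exact_mod_cast hn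
      omega
    · have h2 : ((n + 1 : ℕ) : ℤ) < 1 - i := Int.lt_toNat.mp hn
      push_cast at h2
      omega
  -- abbreviations
  set X : B := (∏ᶜ T).X i with hX
  let π : ∀ n : ℕ, X ⟶ (T n).X i := fun n => (Pi.π T n).f i
  let q : ∀ n : ℕ, Bc.X i ⟶ (T n).X i := fun n => (p n).f i
  let f : Bc.X i ⟶ X := (Pi.lift p).f i
  let g : X ⟶ X := (𝟙 (∏ᶜ T) - Pi.lift fun n => Pi.π T (n + 1) ≫ t n).f i
  have hf : ∀ n, f ≫ π n = q n := by
    intro n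
    have h1 : Pi.lift p ≫ Pi.π T n = p n := by simp
    have := congrArg (fun φ => HomologicalComplex.Hom.f φ i) h1
    simpa only [f, π, q, HomologicalComplex.comp_f] using this
  have hg : ∀ n, g ≫ π n = π n - π (n + 1) ≫ (t n).f i := by
    intro n
    have h1 : (𝟙 (∏ᶜ T) - Pi.lift fun n => Pi.π T (n + 1) ≫ t n) ≫ Pi.π T n =
        Pi.π T n - Pi.π T (n + 1) ≫ t n := by
      simp [Preadditive.sub_comp]
    have := congrArg (fun φ => HomologicalComplex.Hom.f φ i) h1
    simpa only [g, π, HomologicalComplex.comp_f, HomologicalComplex.sub_f_apply,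
      HomologicalComplex.id_f] using this
  have ht' : ∀ n, q (n + 1) ≫ (t n).f i = q n := by
    intro n
    have := congrArg (fun φ => HomologicalComplex.Hom.f φ i) (ht n)
    simpa only [q, HomologicalComplex.comp_f] using this
  -- the degreewise inverses of `p`
  let j : ∀ n : ℕ, (T n).X i ⟶ Bc.X i := fun n =>
    if h : -(n : ℤ) < i then (letI := hTiso n i h; inv (q n)) else 0
  have hqj : ∀ n : ℕ, -(n : ℤ) < i → q n ≫ j n = 𝟙 _ := by
    intro n h
    letI := hTiso n i h
    simp [j, dif_pos h, q]
  have hjq : ∀ n : ℕ, -(n : ℤ) < i → j n ≫ q n = 𝟙 _ := by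
    intro n h
    letI := hTiso n i h
    simp [j, dif_pos h, q]
  have hsucc : ∀ n : ℕ, -(n : ℤ) < i → -((n + 1 : ℕ) : ℤ) < i := by
    intro n h; push_cast; omega
  have htj : ∀ n : ℕ, -(n : ℤ) < i → (t n).f i ≫ j n = j (n + 1) := by
    intro n h
    have h1 := hjq (n + 1) (hsucc n h)
    calc (t n).f i ≫ j n = (j (n + 1) ≫ q (n + 1)) ≫ (t n).f i ≫ j n := by
          rw [h1, Category.id_comp]
      _ = j (n + 1) ≫ (q (n + 1) ≫ (t n).f i) ≫ j n := by simp only [Category.assoc]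
      _ = j (n + 1) := by rw [ht' n, hqj n h, Category.comp_id]
  have hjt : ∀ n : ℕ, -((n + 1 : ℕ) : ℤ) < i → (t n).f i = j (n + 1) ≫ q n := by
    intro n h
    rw [← ht' n, ← Category.assoc, hjq (n + 1) h, Category.id_comp]
  -- the components of the section `s`
  let z : ∀ n : ℕ, X ⟶ (T n).X i := fun n =>
    if N ≤ n then (-(∑ k ∈ Finset.Ico N n, π k ≫ j k)) ≫ q n else π n
  -- construct `s` using the limit structure in degree `i`
  let ev := HomologicalComplex.eval B (ComplexShape.up ℤ) i
  have hl : IsLimit (ev.mapCone (limit.cone (Discrete.functor T))) :=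
    isLimitOfPreserves ev (limit.isLimit _)
  have hext : ∀ {Z : B} (a b : Z ⟶ X), (∀ n, a ≫ π n = b ≫ π n) → a = b := by
    intro Z a b h
    exact hl.hom_ext (by rintro ⟨n⟩; exact h n)
  let c : Cone (Discrete.functor T ⋙ ev) :=
    { pt := X, π := Discrete.natTrans (fun n => z n.as) }
  let s : X ⟶ X := hl.lift c
  have hs : ∀ n, s ≫ π n = z n := fun n => hl.fac c ⟨n⟩
  -- telescoping
  have htel : ∀ n : ℕ, N ≤ n →
      (∑ k ∈ Finset.Ico N n, (π k ≫ j k - π (k + 1) ≫ j (k + 1))) =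
        π N ≫ j N - π n ≫ j n := by
    intro n hn
    induction n, hn using Nat.le_induction with
    | base => simp
    | succ n hn ih =>
        rw [Finset.sum_Ico_succ_top hn, ih]
        abel
  refine ⟨ShortComplex.Splitting.mk (r := π N ≫ j N) (s := s) ?_ ?_ ?_⟩
  · -- f ≫ r = 𝟙
    show f ≫ π N ≫ j N = 𝟙 _
    rw [← Category.assoc, hf N, hqj N (hN1 N le_rfl)]
  · -- s ≫ g = 𝟙
    apply hext
    intro n
    show (s ≫ g) ≫ π n = 𝟙 X ≫ π n
    rw [Category.assoc, hg n, Preadditive.comp_sub, hs n, ← Category.assoc, hs (n + 1),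
      Category.id_comp]
    rcases lt_trichotomy (n + 1) N with h | h | h
    · exact ((hT0 n i (hN2 n h)).eq_of_tgt _ _)
    · have hn : ¬ (N ≤ n) := by omega
      have hzn1 : z (n + 1) = 0 := by
        simp [z, ← h, Finset.Ico_self]
      rw [hzn1, zero_comp, sub_zero]
      simp [z, if_neg hn]
    · have hn : N ≤ n := by omega
      have hn1 : N ≤ n + 1 := by omega
      show (if N ≤ n then (-(∑ k ∈ Finset.Ico N n, π k ≫ j k)) ≫ q n else π n) -
        (if N ≤ n + 1 then (-(∑ k ∈ Finset.Ico N (n+1), π k ≫ j k)) ≫ q (n+1) else π (n+1))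
          ≫ (t n).f i = π n
      rw [if_pos hn, if_pos hn1, Category.assoc, ht' n,
        Finset.sum_Ico_succ_top hn]
      rw [Preadditive.neg_comp, Preadditive.neg_comp, Preadditive.add_comp, sub_neg_eq_add]
      rw [Category.assoc, hjq n (hN1 n hn), Category.comp_id]
      abel
  · -- r ≫ f + g ≫ s = 𝟙
    apply hext
    intro n
    show ((π N ≫ j N) ≫ f + g ≫ s) ≫ π n = 𝟙 X ≫ π n
    rw [Preadditive.add_comp, Category.assoc, Category.assoc, hf n, Category.assoc, hs n,
      Category.id_comp]
    rcases lt_trichotomy (n + 1) N with h | h | h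
    · exact ((hT0 n i (hN2 n h)).eq_of_tgt _ _)
    · subst h
      have hn : ¬ (n + 1 ≤ n) := by omega
      have hzn : z n = π n := by simp [z, if_neg hn]
      rw [hzn, hg n, hjt n (hN1 (n + 1) le_rfl)]
      abel
    · have hn : N ≤ n := by omega
      have hzn : z n = (-(∑ k ∈ Finset.Ico N n, π k ≫ j k)) ≫ q n := by
        simp only [z, if_pos hn]
      have hsum : g ≫ (∑ k ∈ Finset.Ico N n, π k ≫ j k) =
          π N ≫ j N - π n ≫ j n := by
        rw [Preadditive.comp_sum, ← htel n hn]
        refine Finset.sum_congr rfl (fun k hk => ?_)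
        have hk' : N ≤ k := (Finset.mem_Ico.mp hk).1
        rw [← Category.assoc, hg k, Preadditive.sub_comp, Category.assoc, htj k (hN1 k hk')]
      have hgz : g ≫ z n = (π n ≫ j n - π N ≫ j N) ≫ q n := by
        rw [hzn, ← Category.assoc, Preadditive.comp_neg, hsum, neg_sub]
      rw [hgz, Preadditive.sub_comp, Category.assoc, hjq n (hN1 n hn), Category.comp_id, Category.assoc]
      abel

end Aux

/-- Let `B` be an additive category with countable products and
cokernels, and let `Bc` be a bounded above cochain complex in `B`.  Suppose given, for
every `n : ℕ`, the canonical truncation `T n = τ_{≥ -n} Bc` together with the natural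
projection `p n : Bc ⟶ T n` — characterized by: `(T n).X i` vanishes in degrees
`i < -n`, `(p n).f i` is an isomorphism in degrees `i > -n`, and in degree `-n` the map
`(p n).f (-n)` is a cokernel of the differential `Bc.d (-n-1) (-n)` — together with the
natural transition maps `t n : T (n+1) ⟶ T n` (i.e. satisfying `p (n+1) ≫ t n = p n`).
Then the short sequence of complexes
`0 ⟶ Bc ⟶ ∏ₙ T n ⟶ (id - shift) ⟶ ∏ₙ T n ⟶ 0` is degreewise split exact;
consequently, in the homotopy category, `Bc` is a homotopy limit of the bounded complexes
`T n`: the triangle `Bc ⟶ ∏ₙ T n ⟶ ∏ₙ T n ⟶ Bc⟦1⟧` is distinguished. -/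
theorem statement_18 (B : Type u) [Category.{v} B] [Preadditive B] [HasZeroObject B]
    [HasBinaryBiproducts B] [HasCountableProducts B] [HasCokernels B]
    (Bc : CochainComplex B ℤ)
    (hbdd : ∃ N : ℤ, ∀ i : ℤ, N < i → IsZero (Bc.X i))
    (T : ℕ → CochainComplex B ℤ) (p : ∀ n, Bc ⟶ T n)
    (hT0 : ∀ (n : ℕ) (i : ℤ), i < -(n : ℤ) → IsZero ((T n).X i))
    (hTiso : ∀ (n : ℕ) (i : ℤ), -(n : ℤ) < i → IsIso ((p n).f i))
    (hw : ∀ n : ℕ, Bc.d (-(n : ℤ) - 1) (-(n : ℤ)) ≫ (p n).f (-(n : ℤ)) = 0)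
    (hcoker : ∀ n : ℕ,
      Nonempty (IsColimit (CokernelCofork.ofπ ((p n).f (-(n : ℤ))) (hw n))))
    (t : ∀ n : ℕ, T (n + 1) ⟶ T n) (ht : ∀ n : ℕ, p (n + 1) ≫ t n = p n) :
    ∃ h0 : Pi.lift p ≫ (𝟙 (∏ᶜ T) - Pi.lift fun n => Pi.π T (n + 1) ≫ t n) = 0,
      (∀ i : ℤ,
        Nonempty ((ShortComplex.mk ((Pi.lift p).f i)
          ((𝟙 (∏ᶜ T) - Pi.lift fun n => Pi.π T (n + 1) ≫ t n).f i)
          (by simpa using congrArg (fun φ => HomologicalComplex.Hom.f φ i) h0)).Splitting)) ∧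
      ∃ γ : (HomotopyCategory.quotient B (ComplexShape.up ℤ)).obj (∏ᶜ T) ⟶
          ((HomotopyCategory.quotient B (ComplexShape.up ℤ)).obj Bc)⟦(1 : ℤ)⟧,
        Triangle.mk ((HomotopyCategory.quotient B (ComplexShape.up ℤ)).map (Pi.lift p))
          ((HomotopyCategory.quotient B (ComplexShape.up ℤ)).map
            (𝟙 (∏ᶜ T) - Pi.lift fun n => Pi.π T (n + 1) ≫ t n)) γ
          ∈ distTriang (HomotopyCategory B (ComplexShape.up ℤ)) := by
  have h0 := aux_h0 Bc T p t ht
  refine ⟨h0, ?_, ?_⟩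
  · intro i
    exact ⟨let σ := (aux_splitting Bc T p hT0 hTiso t ht h0 i).some; ⟨σ.r, σ.s, σ.f_r, σ.s_g, σ.id⟩⟩
  · set S : ShortComplex (CochainComplex B ℤ) :=
      ShortComplex.mk (Pi.lift p) (𝟙 (∏ᶜ T) - Pi.lift fun n => Pi.π T (n + 1) ≫ t n) h0 with hS
    let σ := fun n => (aux_splitting Bc T p hT0 hTiso t ht h0 n).some
    have hd : CochainComplex.trianglehOfDegreewiseSplit S σ ∈
        distTriang (HomotopyCategory B (ComplexShape.up ℤ)) :=
      (HomotopyCategory.distinguished_iff_iso_trianglehOfDegreewiseSplit _).2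
        ⟨S, σ, ⟨Iso.refl _⟩⟩
    refine ⟨(HomotopyCategory.quotient B (ComplexShape.up ℤ)).map
        (CochainComplex.homOfDegreewiseSplit S σ) ≫
        ((HomotopyCategory.quotient B (ComplexShape.up ℤ)).commShiftIso (1 : ℤ)).hom.app Bc, ?_⟩
    refine Pretriangulated.isomorphic_distinguished _ hd _ ?_
    exact Triangle.isoMk _ _ (Iso.refl _) (Iso.refl _) (Iso.refl _)
      ((Category.comp_id _).trans (Category.id_comp _).symm)
      ((Category.comp_id _).trans (Category.id_comp _).symm)
      (by erw [CategoryTheory.Functor.map_id]; exact (Category.comp_id _).trans (Category.id_comp _).symm)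

end ProPaper
end
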